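/- arXiv:2103.00911 — 15 statements merged into one kernel-verified Lean document; each statement's English description precedes it below -/
import Mathlib

section
/- Let a* be a Plurality winner, i.e., an alternative maximizing the number of agents who rank it first. Then the social welfare of a* satisfies SW(a*) ≥ n/m², and consequently SW(b) ≤ m² · SW(a*) for every alternative b ∈ A. -/
/-- **Distortion of Plurality, upper bound.**
Normalized single-winner setting: `n ≥ 1` agents, `m ≥ 1` alternatives (`Fin m`),
unit-sum nonnegative valuations `v`, and rankings `σ` where `σ i a` is the
(0-indexed) position of alternative `a` in agent `i`'s ranking, consistent with `v`.
If `astar` is a Plurality winner (it is ranked first by the most agents), then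
`SW(astar) ≥ n / m²`, and consequently `SW(b) ≤ m² ⬝ SW(astar)` for every alternative `b`. -/
theorem plurality_distortion_upper_bound
    (n m : ℕ) (hn : 1 ≤ n) (hm : 1 ≤ m)
    (v : Fin n → Fin m → ℝ)
    (hv0 : ∀ i a, 0 ≤ v i a)
    (hv1 : ∀ i, ∑ a, v i a = 1)
    (σ : Fin n → (Fin m ≃ Fin m))
    (hcons : ∀ i a b, σ i a < σ i b → v i b ≤ v i a)
    (astar : Fin m)
    (hplu : ∀ b : Fin m,
      (Finset.univ.filter (fun i : Fin n => (σ i).symm ⟨0, hm⟩ = b)).card ≤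
      (Finset.univ.filter (fun i : Fin n => (σ i).symm ⟨0, hm⟩ = astar)).card) :
    (n : ℝ) / (m : ℝ) ^ 2 ≤ ∑ i, v i astar ∧
      ∀ b : Fin m, ∑ i, v i b ≤ (m : ℝ) ^ 2 * ∑ i, v i astar := by
  have hm0 : (0:ℝ) < m := by exact_mod_cast hm
  set T : Finset (Fin n) := Finset.univ.filter (fun i : Fin n => (σ i).symm ⟨0, hm⟩ = astar) with hT
  -- each top-voter gives ≥ 1/m
  have htop : ∀ i ∈ T, 1 / (m:ℝ) ≤ v i astar := by
    intro i hi
    rw [hT, Finset.mem_filter] at hi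
    have hσ : σ i astar = ⟨0, hm⟩ := by rw [← hi.2]; simp
    have hmax : ∀ a : Fin m, v i a ≤ v i astar := by
      intro a
      by_cases h : a = astar
      · exact le_of_eq (by rw [h])
      · apply hcons
        rw [hσ]
        refine lt_of_le_of_ne (by simp [Fin.le_def]) ?_
        intro heq
        exact h ((σ i).injective (hσ.trans heq)).symm
    have hsum : (1:ℝ) ≤ m * v i astar := by
      calc (1:ℝ) = ∑ a, v i a := (hv1 i).symm
        _ ≤ ∑ _a : Fin m, v i astar := Finset.sum_le_sum (fun a _ => hmax a)
        _ = m * v i astar := by simp [mul_comm]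
    rw [div_le_iff₀ hm0]
    linarith [mul_comm (v i astar) (m:ℝ)]
  -- counting: n ≤ m * T.card
  have hcount : n ≤ m * T.card := by
    have h1 : (Finset.univ : Finset (Fin n)).card =
        ∑ b : Fin m, (Finset.univ.filter (fun i : Fin n => (σ i).symm ⟨0, hm⟩ = b)).card :=
      Finset.card_eq_sum_card_fiberwise (fun x _ => Finset.mem_univ _)
    calc n = (Finset.univ : Finset (Fin n)).card := by simp
      _ = ∑ b : Fin m, (Finset.univ.filter (fun i : Fin n => (σ i).symm ⟨0, hm⟩ = b)).card := h1
      _ ≤ ∑ _b : Fin m, T.card := Finset.sum_le_sum (fun b _ => hplu b)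
      _ = m * T.card := by simp [mul_comm]
  have hmain : (n : ℝ) / (m : ℝ) ^ 2 ≤ ∑ i, v i astar := by
    have h2 : (T.card : ℝ) * (1 / m) ≤ ∑ i ∈ T, v i astar := by
      calc (T.card : ℝ) * (1 / m) = ∑ _i ∈ T, (1 / (m:ℝ)) := by simp [mul_comm]
        _ ≤ ∑ i ∈ T, v i astar := Finset.sum_le_sum htop
    have h3 : ∑ i ∈ T, v i astar ≤ ∑ i, v i astar :=
      Finset.sum_le_sum_of_subset_of_nonneg (Finset.subset_univ T) (fun i _ _ => hv0 i astar)
    have h4 : (n : ℝ) ≤ m * T.card := by exact_mod_cast hcount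
    rw [div_le_iff₀ (by positivity)]
    have hm2 : (0:ℝ) ≤ (m:ℝ)^2 := by positivity
    have h2' := mul_le_mul_of_nonneg_right h2 hm2
    have h3' := mul_le_mul_of_nonneg_right h3 hm2
    have h5 : (T.card:ℝ)*(1/m)*(m:ℝ)^2 = (m:ℝ) * T.card := by field_simp
    linarith
  refine ⟨hmain, fun b => ?_⟩
  have hb1 : ∑ i, v i b ≤ (n:ℝ) := by
    calc ∑ i, v i b ≤ ∑ _i : Fin n, (1:ℝ) := by
          apply Finset.sum_le_sum
          intro i _
          rw [← hv1 i]
          exact Finset.single_le_sum (fun a _ => hv0 i a) (Finset.mem_univ b)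
      _ = n := by simp
  have := (div_le_iff₀ (by positivity : (0:ℝ) < (m:ℝ)^2)).mp hmain
  linarith
end

section
/- Fix m ≥ 3 and a set A of m alternatives. For every deterministic voting rule f, which for every number n of agents maps each profile of strict rankings over A to a single alternative of A, there exist a number n of agents, a profile of unit-sum valuations (v_i)_{i∈N} with consistent rankings ≻ = (≻_i)_{i∈N}, and an alternative b ∈ A such that SW(b) ≥ (m(m−2)/4) · SW(f(≻)). In particular, the distortion of every deterministic voting rule is Ω(m²). -/
/-- **Lower bound of `Ω(m²)` on the distortion of every deterministic voting rule.**
Fix `m ≥ 3` alternatives (`Fin m`). A deterministic voting rule `f` maps, for every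
number `n` of agents, each profile of strict rankings (encoded as position functions
`σ i : Fin m ≃ Fin m`, smaller position = more preferred) to a single alternative.
There is an instance (a number `n ≥ 1` of agents, nonnegative unit-sum valuations `v`,
and a consistent profile of rankings `σ`) and an alternative `b` whose social welfare
is at least `(m(m-2)/4)` times the social welfare of the chosen alternative `f n σ`. -/
theorem deterministic_rule_distortion_lower_bound
    (m : ℕ) (hm : 3 ≤ m)
    (f : ∀ n : ℕ, (Fin n → (Fin m ≃ Fin m)) → Fin m) :
    ∃ n : ℕ, 1 ≤ n ∧
      ∃ (v : Fin n → Fin m → ℝ) (σ : Fin n → (Fin m ≃ Fin m)),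
        (∀ i a, 0 ≤ v i a) ∧ (∀ i, ∑ a, v i a = 1) ∧
        (∀ i a b, σ i a < σ i b → v i b ≤ v i a) ∧
        ∃ b : Fin m,
          ((m : ℝ) * ((m : ℝ) - 2) / 4) * ∑ i, v i (f n σ) ≤ ∑ i, v i b := by
  have hm0 : 0 < m := by omega
  refine ⟨m - 1, by omega, ?_⟩
  let z : Fin m := ⟨0, by omega⟩
  let o : Fin m := ⟨1, by omega⟩
  let bb : Fin m := ⟨m - 1, by omega⟩
  let a : Fin (m - 1) → Fin m := fun i => ⟨i.val, by have := i.isLt; omega⟩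
  have hzb : z ≠ bb := by simp [z, bb, Fin.ext_iff]; omega
  have hbo : bb ≠ o := by simp [bb, o, Fin.ext_iff]; omega
  have hzo : z ≠ o := by simp [z, o, Fin.ext_iff]
  have hba : ∀ i, bb ≠ a i := by
    intro i; have := i.isLt; simp only [bb, a, ne_eq, Fin.ext_iff]; omega
  let σ : Fin (m - 1) → (Fin m ≃ Fin m) :=
    fun i => (Equiv.swap z (a i)).trans (Equiv.swap bb o)
  have hσa : ∀ i, σ i (a i) = z := by
    intro i
    simp only [σ, Equiv.trans_apply, Equiv.swap_apply_right]
    exact Equiv.swap_apply_of_ne_of_ne hzb hzo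
  have hσb : ∀ i, σ i bb = o := by
    intro i
    simp only [σ, Equiv.trans_apply]
    rw [Equiv.swap_apply_of_ne_of_ne hzb.symm (hba i), Equiv.swap_apply_left]
  set w : Fin m := f (m - 1) σ with hwdef
  by_cases hw : w = bb
  · -- rule picks bb: everyone puts full value on their top
    let v : Fin (m - 1) → Fin m → ℝ := fun i x => if σ i x = z then (1:ℝ) else 0
    refine ⟨v, σ, ?_, ?_, ?_, ?_⟩
    · intro i x; simp only [v]; split <;> norm_num
    · intro i
      show (∑ x : Fin m, if σ i x = z then (1:ℝ) else 0) = 1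
      rw [Equiv.sum_comp (σ i) (fun k => if k = z then (1:ℝ) else 0)]
      simp
    · intro i x y h
      by_cases h1 : σ i y = z
      · exfalso
        rw [Fin.lt_def, h1] at h
        simp [z] at h
      · show (if σ i y = z then (1:ℝ) else 0) ≤ (if σ i x = z then (1:ℝ) else 0)
        rw [if_neg h1]; split <;> norm_num
    · refine ⟨bb, ?_⟩
      have h0 : ∀ i : Fin (m-1), v i bb = 0 := by
        intro i; simp only [v]; rw [hσb i, if_neg (Ne.symm hzo)]
      rw [← hwdef, hw]
      simp only [h0, Finset.sum_const_zero, mul_zero, le_refl]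
  · -- rule picks some w ≠ bb
    have hwlt : w.val < m - 1 := by
      have h1 := w.isLt
      have h2 : w.val ≠ m - 1 := fun hc => hw (Fin.ext hc)
      omega
    let j : Fin (m - 1) := ⟨w.val, hwlt⟩
    let v : Fin (m - 1) → Fin m → ℝ :=
      fun i x => if (i : ℕ) = (w : ℕ) then 1 / m
        else if ((σ i x) : ℕ) ≤ 1 then 1 / 2 else 0
    have hvnn : ∀ i x, 0 ≤ v i x := by
      intro i x; simp only [v]; split_ifs <;> positivity
    refine ⟨v, σ, hvnn, ?_, ?_, ?_⟩
    · intro i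
      by_cases hi : (i : ℕ) = (w : ℕ)
      · simp only [v, hi, if_true]
        rw [Finset.sum_const, Finset.card_univ, Fintype.card_fin, nsmul_eq_mul]
        field_simp
      · simp only [v, hi, if_false]
        rw [Equiv.sum_comp (σ i) (fun k => if (k : ℕ) ≤ 1 then (1:ℝ)/2 else 0)]
        have hsplit : ∀ k : Fin m, (if (k : ℕ) ≤ 1 then (1:ℝ)/2 else 0)
            = (if k = z then (1:ℝ)/2 else 0) + (if k = o then (1:ℝ)/2 else 0) := by
          intro k
          by_cases hk0 : k = z
          · rw [hk0, if_pos (by simp [z]), if_pos rfl, if_neg hzo]; norm_num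
          · by_cases hk1 : k = o
            · rw [hk1, if_pos (by simp [o]), if_neg (Ne.symm hzo), if_pos rfl]
              norm_num
            · have hk : ¬ (k : ℕ) ≤ 1 := by
                intro hc
                interval_cases h : (k : ℕ)
                · exact hk0 (Fin.ext h)
                · exact hk1 (Fin.ext h)
              rw [if_neg hk, if_neg hk0, if_neg hk1]; norm_num
        simp only [hsplit]
        rw [Finset.sum_add_distrib, Finset.sum_ite_eq' _ z, Finset.sum_ite_eq' _ o]
        norm_num
    · intro i x y h
      rw [Fin.lt_def] at h
      by_cases hi : (i : ℕ) = (w : ℕ)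
      · simp [v, hi]
      · simp only [v, hi, if_false]
        rcases le_or_gt ((σ i y : ℕ)) 1 with h1 | h1
        · rw [if_pos h1, if_pos (by omega)]
        · rw [if_neg (by omega)]
          split <;> norm_num
    · refine ⟨bb, ?_⟩
      rw [← hwdef]
      have hSw : ∑ i, v i w = 1 / m := by
        rw [Finset.sum_eq_single j]
        · simp only [v, j, if_pos rfl]
        · intro i _ hij
          have hiw : (i : ℕ) ≠ (w : ℕ) := by
            intro hc; exact hij (Fin.ext hc)
          simp only [v, hiw, if_false]
          have h1 : σ i w ≠ z := by
            intro hc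
            rw [← hσa i] at hc
            have h3 := (σ i).injective hc
            exact hiw (congrArg Fin.val h3.symm)
          have h2 : σ i w ≠ o := by
            intro hc
            rw [← hσb i] at hc
            exact hw ((σ i).injective hc)
          have hle : ¬ ((σ i w : ℕ)) ≤ 1 := by
            intro hc
            interval_cases h : ((σ i w : ℕ))
            · exact h1 (Fin.ext h)
            · exact h2 (Fin.ext h)
          rw [if_neg hle]
        · intro hj; exact absurd (Finset.mem_univ j) hj
      have hSb : ∑ i, v i bb = ((m : ℝ) - 1) / 2 + (1 / m - 1 / 2) := by
        have hterm : ∀ i : Fin (m - 1), v i bb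
            = 1 / 2 + (if i = j then (1:ℝ) / m - 1 / 2 else 0) := by
          intro i
          have hiff : ((i : ℕ) = (w : ℕ)) ↔ i = j := by
            constructor
            · intro hc; exact Fin.ext hc
            · intro hc; rw [hc]
          simp only [v, hσb i]
          have ho1 : ((o : Fin m) : ℕ) ≤ 1 := by simp [o]
          rw [if_pos ho1]
          by_cases hc : i = j
          · rw [if_pos (hiff.mpr hc), if_pos hc]; ring
          · rw [if_neg (fun hh => hc (hiff.mp hh)), if_neg hc]; ring
        simp only [hterm]
        rw [Finset.sum_add_distrib, Finset.sum_ite_eq' _ j, Finset.sum_const,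
          Finset.card_univ, Fintype.card_fin, nsmul_eq_mul]
        have hc1 : ((m - 1 : ℕ) : ℝ) = (m : ℝ) - 1 := by
          rw [Nat.cast_sub (by omega)]; norm_num
        rw [hc1]
        simp only [Finset.mem_univ, if_pos]
        ring
      rw [hSw, hSb]
      have hm3 : (3 : ℝ) ≤ (m : ℝ) := by exact_mod_cast hm
      have hmp : (0 : ℝ) < (m : ℝ) := by linarith
      have key : ((m : ℝ) * ((m : ℝ) - 2) / 4) * (1 / m) = ((m : ℝ) - 2) / 4 := by
        field_simp
      rw [key]
      have hinv : (0 : ℝ) < 1 / m := by positivity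
      linarith
end

section
/- For every m ≥ 3 and every real number B > 0, there exists an instance of the normalized single-winner setting (a number n of agents, unit-sum valuations, and consistent rankings) that contains an alternative a maximizing the Borda score together with an alternative b such that SW(b) > B · SW(a). Hence the distortion of the Borda rule is unbounded. -/
/-- The ranking of the second agent, as a function: alternative `m-1` first,
alternative `1` second, alternative `0` last, and the middle reversed. -/
def tauFun (m : ℕ) (hm : 3 ≤ m) : Fin m → Fin m :=
  fun g =>
    if (g : ℕ) = 1 then g
    else if h0 : (g : ℕ) = 0 then ⟨m - 1, by omega⟩
    else if (g : ℕ) = m - 1 then ⟨0, by omega⟩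
    else ⟨m - (g : ℕ), by have := g.isLt; omega⟩

lemma tauFun_coe (m : ℕ) (hm : 3 ≤ m) (g : Fin m) :
    ((tauFun m hm g : Fin m) : ℕ) =
      if (g : ℕ) = 1 then 1
      else if (g : ℕ) = 0 then m - 1
      else if (g : ℕ) = m - 1 then 0
      else m - (g : ℕ) := by
  unfold tauFun
  split_ifs <;> simp_all

lemma tauFun_invol (m : ℕ) (hm : 3 ≤ m) : Function.Involutive (tauFun m hm) := by
  intro g
  apply Fin.ext
  have h := g.isLt
  rw [tauFun_coe, tauFun_coe]
  split_ifs <;> first | omega | exact (by assumption : False).elim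

/-- **The distortion of the Borda rule is unbounded.**
For every `m ≥ 3` and every bound `B > 0` there is an instance of the normalized
single-winner setting (a number `n ≥ 1` of agents, nonnegative unit-sum valuations `v`,
and consistent rankings `σ`, where `σ i a` is the 0-indexed position of `a` in agent
`i`'s ranking, so the rank of `a` is `σ i a + 1` and its Borda score is
`∑ i, (m - 1 - σ i a)`) containing a Borda winner `a` and an alternative `b` with
`SW(b) > B ⬝ SW(a)`. -/
theorem borda_distortion_unbounded
    (m : ℕ) (hm : 3 ≤ m) (B : ℝ) (hB : 0 < B) :
    ∃ n : ℕ, 1 ≤ n ∧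
      ∃ (v : Fin n → Fin m → ℝ) (σ : Fin n → (Fin m ≃ Fin m)) (a b : Fin m),
        (∀ i g, 0 ≤ v i g) ∧ (∀ i, ∑ g, v i g = 1) ∧
        (∀ i g g', σ i g < σ i g' → v i g' ≤ v i g) ∧
        (∀ a' : Fin m,
          ∑ i, (m - 1 - ((σ i a' : Fin m) : ℕ)) ≤ ∑ i, (m - 1 - ((σ i a : Fin m) : ℕ))) ∧
        B * ∑ i, v i a < ∑ i, v i b := by
  have h0m : 0 < m := by omega
  have h1m : 1 < m := by omega
  refine ⟨2, by norm_num, ?_⟩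
  set bb : Fin m := ⟨0, by omega⟩ with hbb
  set aa : Fin m := ⟨1, by omega⟩ with haa
  set cc : Fin m := ⟨m - 1, by omega⟩ with hcc
  refine ⟨![fun g => if g = bb then 1 else 0, fun g => if g = cc then 1 else 0],
    ![Equiv.refl _, (tauFun_invol m hm).toPerm], aa, bb, ?_, ?_, ?_, ?_, ?_⟩
  · intro i g
    fin_cases i <;> simp only [Fin.mk_zero, Fin.mk_one, Matrix.cons_val_zero, Matrix.cons_val_one, Matrix.head_cons] <;>
      split_ifs <;> norm_num
  · intro i
    fin_cases i <;> simp [Finset.sum_ite_eq]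
  · intro i
    fin_cases i <;> intro g g' hlt <;>
      simp only [Fin.mk_zero, Fin.mk_one, Matrix.cons_val_zero, Matrix.cons_val_one, Matrix.head_cons,
        Equiv.refl_apply, Function.Involutive.coe_toPerm] at hlt ⊢
    · have hg' : g' ≠ bb := by
        intro h
        subst h
        rw [Fin.lt_def] at hlt
        simp [hbb] at hlt
      simp only [hg', if_false]
      split_ifs <;> norm_num
    · have hcc0 : ((tauFun m hm cc : Fin m) : ℕ) = 0 := by
        have hc : (cc : ℕ) = m - 1 := rfl
        rw [tauFun_coe, hc]
        split_ifs <;> omega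
      have hg' : g' ≠ cc := by
        intro h
        rw [h, Fin.lt_def, hcc0] at hlt
        omega
      simp only [hg', if_false]
      split_ifs <;> norm_num
  · intro a'
    rw [Fin.sum_univ_two, Fin.sum_univ_two]
    simp only [Fin.mk_zero, Fin.mk_one, Matrix.cons_val_zero, Matrix.cons_val_one, Matrix.head_cons,
      Equiv.refl_apply, Function.Involutive.coe_toPerm]
    rw [tauFun_coe, tauFun_coe]
    have := a'.isLt
    simp only [haa]
    split_ifs <;> simp_all <;> omega
  · rw [Fin.sum_univ_two, Fin.sum_univ_two]
    have hab : aa ≠ bb := by simp [haa, hbb, Fin.ext_iff]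
    have hac : aa ≠ cc := by simp [haa, hcc, Fin.ext_iff]; omega
    have hbc : bb ≠ cc := by simp [hbb, hcc, Fin.ext_iff]; omega
    simp [hab, hac, hbc]
end

section
/- There exists a constant c > 0 such that for every m ≥ 2 and every randomized voting rule f, which for every number n of agents maps each profile of strict rankings over a set A of m alternatives to a probability distribution over A, there exists an instance (a number n of agents, unit-sum valuations, and consistent rankings ≻) in which max_{b∈A} SW(b) ≥ c·√m · E_{a∼f(≻)}[SW(a)]. In words, the distortion of every randomized voting rule is Ω(√m). -/
/-- **Lower bound of `Ω(√m)` on the distortion of every randomized voting rule.**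
There is a constant `c > 0` such that for every `m ≥ 2` and every randomized voting
rule `f` (which, for every number `n` of agents, maps each profile of strict rankings
`σ` to a probability distribution `f n σ` over the `m` alternatives), there is an
instance (a number `n ≥ 1` of agents, nonnegative unit-sum valuations `v`,
and a consistent profile `σ`) in which the maximum social welfare, witnessed by some
alternative `b`, is at least `c⬝√m` times the expected social welfare
`∑ a, f n σ a * SW(a)` of the rule. -/
theorem randomized_rule_distortion_lower_bound :
    ∃ c : ℝ, 0 < c ∧
      ∀ (m : ℕ), 2 ≤ m →
      ∀ f : ∀ n : ℕ, (Fin n → (Fin m ≃ Fin m)) → (Fin m → ℝ),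
        (∀ n σ a, 0 ≤ f n σ a) →
        (∀ n σ, ∑ a, f n σ a = 1) →
        ∃ n : ℕ, 1 ≤ n ∧
          ∃ (v : Fin n → Fin m → ℝ) (σ : Fin n → (Fin m ≃ Fin m)),
            (∀ i a, 0 ≤ v i a) ∧ (∀ i, ∑ a, v i a = 1) ∧
            (∀ i a b, σ i a < σ i b → v i b ≤ v i a) ∧
            ∃ b : Fin m,
              c * Real.sqrt m * (∑ a, f n σ a * ∑ i, v i a) ≤ ∑ i, v i b := by
  refine ⟨1/4, by norm_num, ?_⟩
  intro m hm f hf0 hf1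
  set k : ℕ := Nat.sqrt m with hkdef
  have hk1 : 1 ≤ k := by
    have : 0 < k := Nat.sqrt_pos.mpr (by omega)
    omega
  have hkm : k ≤ m := Nat.sqrt_le_self m
  have hk2 : k * k ≤ m := by have := Nat.sqrt_le' m; nlinarith
  have hm2 : m < (k + 1) * (k + 1) := by have := Nat.lt_succ_sqrt' m; nlinarith
  have hm0 : 0 < m := by omega
  -- the `k` candidate alternatives
  have hc : ∀ j : Fin k, (j : ℕ) < m := fun j => lt_of_lt_of_le j.2 hkm
  set c : Fin k → Fin m := fun j => ⟨j, hc j⟩ with hcdef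
  have hcinj : Function.Injective c := by
    intro a b hab
    exact Fin.ext (by simpa [hcdef] using congrArg Fin.val hab)
  -- top alternative position
  set z : Fin m := ⟨0, by omega⟩ with hzdef
  -- profile: agent j ranks candidate j on top
  set σ : Fin k → (Fin m ≃ Fin m) := fun j => Equiv.swap z (c j) with hσdef
  -- some candidate receives probability at most 1/k
  have hstar : ∃ j : Fin k, f k σ (c j) ≤ 1 / k := by
    by_contra h
    push_neg at h
    have hsum : (1 : ℝ) < ∑ j : Fin k, f k σ (c j) := by
      have := Finset.sum_lt_sum_of_nonempty
        (s := (Finset.univ : Finset (Fin k)))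
        (by exact Finset.univ_nonempty_iff.mpr ⟨⟨0, hk1⟩⟩)
        (f := fun _ => (1 : ℝ) / k) (g := fun j => f k σ (c j))
        (fun j _ => h j)
      have h1 : ∑ _j : Fin k, (1 : ℝ) / k = 1 := by
        rw [Finset.sum_const, Finset.card_univ, Fintype.card_fin, nsmul_eq_mul]
        field_simp
      linarith [this, h1.symm.le]
    have hle : ∑ j : Fin k, f k σ (c j) ≤ ∑ a : Fin m, f k σ a := by
      have himg : ∑ j : Fin k, f k σ (c j)
          = ∑ a ∈ Finset.univ.image c, f k σ a :=
        (Finset.sum_image (fun a _ b _ h => hcinj h)).symm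
      rw [himg]
      exact Finset.sum_le_sum_of_subset_of_nonneg (Finset.subset_univ _)
        (fun a _ _ => hf0 k σ a)
    rw [hf1 k σ] at hle
    linarith
  obtain ⟨j0, hj0⟩ := hstar
  -- valuations
  set v : Fin k → Fin m → ℝ :=
    fun i a => if i = j0 then (if a = c j0 then 1 else 0) else 1 / m with hvdef
  have hv0 : ∀ i a, 0 ≤ v i a := by
    intro i a
    simp only [hvdef]
    split <;> [skip; positivity]
    split <;> norm_num
  refine ⟨k, hk1, v, σ, hv0, ?_, ?_, ?_⟩
  · -- unit-sum
    intro i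
    by_cases hi : i = j0
    · simp [hvdef, hi]
    · simp only [hvdef, if_neg hi]
      rw [Finset.sum_const, Finset.card_univ, Fintype.card_fin, nsmul_eq_mul]
      field_simp
  · -- consistency
    intro i a b hab
    by_cases hi : i = j0
    · subst hi
      simp only [hvdef, if_pos rfl]
      by_cases hb : b = c i
      · exfalso
        have hσb : σ i b = z := by rw [hb, hσdef]; exact Equiv.swap_apply_right _ _
        rw [hσb] at hab
        exact absurd hab (by simp [hzdef, Fin.lt_def])
      · rw [if_neg hb]
        split <;> norm_num
    · simp [hvdef, if_neg hi]
  · -- welfare bound, witness b = c j0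
    refine ⟨c j0, ?_⟩
    have hSWb : (1 : ℝ) ≤ ∑ i, v i (c j0) := by
      have := Finset.single_le_sum (f := fun i => v i (c j0))
        (fun i _ => hv0 i (c j0)) (Finset.mem_univ j0)
      simpa [hvdef] using this
    -- bound on each SW(a)
    have hSWa : ∀ a : Fin m, ∑ i, v i a ≤ (if a = c j0 then 1 else 0) + k / m := by
      intro a
      have hterm : ∀ i : Fin k,
          v i a ≤ (if a = c j0 ∧ i = j0 then 1 else 0) + 1 / m := by
        intro i
        by_cases ha : a = c j0 <;> by_cases hi : i = j0 <;>
          simp [hvdef, ha, hi] <;> positivity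
      calc ∑ i, v i a ≤ ∑ i : Fin k, ((if a = c j0 ∧ i = j0 then (1:ℝ) else 0) + 1 / m) :=
            Finset.sum_le_sum (fun i _ => hterm i)
        _ = (if a = c j0 then 1 else 0) + k / m := by
            rw [Finset.sum_add_distrib]
            congr 1
            · by_cases ha : a = c j0
              · simp [ha]
              · simp [ha]
            · rw [Finset.sum_const, Finset.card_univ, Fintype.card_fin, nsmul_eq_mul]
              ring
    -- bound expected welfare
    have hE : (∑ a, f k σ a * ∑ i, v i a) ≤ 1 / k + k / m := by
      calc (∑ a, f k σ a * ∑ i, v i a)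
          ≤ ∑ a, f k σ a * ((if a = c j0 then 1 else 0) + k / m) :=
            Finset.sum_le_sum (fun a _ =>
              mul_le_mul_of_nonneg_left (hSWa a) (hf0 k σ a))
        _ = (∑ a, f k σ a * (if a = c j0 then 1 else 0)) + (∑ a, f k σ a) * (k / m) := by
            rw [Finset.sum_mul]
            rw [← Finset.sum_add_distrib]
            congr 1; ext a; ring
        _ = f k σ (c j0) + k / m := by
            rw [hf1 k σ, one_mul]
            congr 1
            simp only [mul_ite, mul_one, mul_zero]
            rw [Finset.sum_ite_eq' Finset.univ (c j0) (f k σ)]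
            simp
        _ ≤ 1 / k + k / m := by linarith
    have hE0 : 0 ≤ ∑ a, f k σ a * ∑ i, v i a :=
      Finset.sum_nonneg (fun a _ => mul_nonneg (hf0 k σ a)
        (Finset.sum_nonneg (fun i _ => hv0 i a)))
    -- real arithmetic
    have hkR : (0:ℝ) < k := by exact_mod_cast hk1
    have hmR : (0:ℝ) < m := by exact_mod_cast hm0
    have hs : 0 < Real.sqrt m := Real.sqrt_pos.mpr hmR
    have hss : Real.sqrt m * Real.sqrt m = m := Real.mul_self_sqrt hmR.le
    have hk2R : (k:ℝ) * k ≤ m := by exact_mod_cast hk2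
    have hk_le : (k:ℝ) ≤ Real.sqrt m := by
      nlinarith [hss, hk2R, mul_self_nonneg ((k:ℝ) - Real.sqrt m)]
    have hs_le : Real.sqrt m ≤ 2 * k := by
      have h1 : Real.sqrt m ≤ (k:ℝ) + 1 := by
        rw [show ((k:ℝ) + 1) = Real.sqrt (((k:ℝ)+1)^2) by
          rw [Real.sqrt_sq (by positivity)]]
        apply Real.sqrt_le_sqrt
        have : (m:ℝ) ≤ ((k:ℝ)+1) * ((k:ℝ)+1) := by exact_mod_cast hm2.le
        nlinarith
      have : (1:ℝ) ≤ k := by exact_mod_cast hk1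
      linarith
    have hkey : Real.sqrt m * (1 / k + k / m) ≤ 4 := by
      rw [div_add_div _ _ hkR.ne' hmR.ne', mul_div_assoc',
        div_le_iff₀ (mul_pos hkR hmR)]
      nlinarith [mul_le_mul_of_nonneg_left hk2R hs.le,
        mul_le_mul_of_nonneg_right hs_le hmR.le]
    calc (1/4 : ℝ) * Real.sqrt m * (∑ a, f k σ a * ∑ i, v i a)
        ≤ (1/4 : ℝ) * Real.sqrt m * (1 / k + k / m) := by
          apply mul_le_mul_of_nonneg_left hE (by positivity)
      _ ≤ 1 := by nlinarith
      _ ≤ ∑ i, v i (c j0) := hSWb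
end

section
/- Consider the randomized voting rule that, given a profile of strict rankings, selects alternative a with probability P(a) = 1/(2m) + hs(a)/(2·Σ_{a'∈A} hs(a')), where hs(a) = Σ_{i∈N} 1/rank_i(a) is the harmonic score of a. There exists a constant c > 0 such that for every m ≥ 2 and every instance with unit-sum valuations and consistent rankings, max_{b∈A} SW(b) ≤ c·√(m·log m) · Σ_{a∈A} P(a)·SW(a). That is, this rule has distortion O(√(m log m)). -/
/-- **The harmonic-score rule of Boutilier et al. has distortion `O(√(m log m))`.**
The randomized rule selects alternative `a` with probability
`1/(2m) + hs(a) / (2 ∑_{a'} hs(a'))`, where `hs(a) = ∑ i, 1/rank_i(a)` is the harmonic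
score of `a` (with `rank_i(a) = σ i a + 1`, `σ i a` being the 0-indexed position of `a`
in agent `i`'s ranking). There is a constant `c > 0` such that, in every instance with
`m ≥ 2` alternatives, `n ≥ 1` agents, nonnegative unit-sum valuations, and consistent
rankings, the maximum social welfare is at most `c⬝√(m log m)` times the expected
social welfare of this rule. -/
theorem harmonic_rule_distortion_upper_bound :
    ∃ c : ℝ, 0 < c ∧
      ∀ (m n : ℕ), 2 ≤ m → 1 ≤ n →
      ∀ (v : Fin n → Fin m → ℝ) (σ : Fin n → (Fin m ≃ Fin m)),
        (∀ i a, 0 ≤ v i a) →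
        (∀ i, ∑ a, v i a = 1) →
        (∀ i a b, σ i a < σ i b → v i b ≤ v i a) →
        ∀ b : Fin m,
          ∑ i, v i b ≤
            c * Real.sqrt ((m : ℝ) * Real.log m) *
              ∑ a, (1 / (2 * (m : ℝ)) +
                  (∑ i, (1 : ℝ) / (((σ i a : Fin m) : ℕ) + 1)) /
                    (2 * ∑ a', ∑ i, (1 : ℝ) / (((σ i a' : Fin m) : ℕ) + 1))) *
                (∑ i, v i a) := by
  refine ⟨2, two_pos, ?_⟩
  intro m n hm hn v σ hv hsum hcons b
  have hm0 : 0 < m := by omega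
  have hmR : (2 : ℝ) ≤ (m : ℝ) := by exact_mod_cast hm
  have hmR0 : (0 : ℝ) < m := by positivity
  have hnR0 : (0 : ℝ) < n := by exact_mod_cast hn
  set H : ℝ := ∑ k : Fin m, (1 : ℝ) / ((k : ℕ) + 1) with hHdef
  -- H ≥ 1
  have hH1 : (1 : ℝ) ≤ H := by
    have h := Finset.single_le_sum (f := fun k : Fin m => (1 : ℝ) / ((k : ℕ) + 1))
      (fun k _ => by positivity) (Finset.mem_univ (⟨0, hm0⟩ : Fin m))
    rw [hHdef]
    simpa using h
  have hH0 : (0 : ℝ) < H := lt_of_lt_of_le one_pos hH1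
  -- H ≤ 4 log m
  have hHlog : H ≤ 4 * Real.log m := by
    have hHeq : H = ((harmonic m : ℚ) : ℝ) := by
      rw [hHdef, Fin.sum_univ_eq_sum_range (fun k => (1 : ℝ) / ((k : ℕ) + 1))]
      simp [harmonic, one_div]
    have h1 : ((harmonic m : ℚ) : ℝ) ≤ 1 + Real.log m := harmonic_le_one_add_log m
    have h2 : Real.log 2 ≤ Real.log m := Real.log_le_log two_pos hmR
    have h3 : (0.6931471803 : ℝ) < Real.log 2 := Real.log_two_gt_d9
    rw [hHeq]
    nlinarith
  have hlogm0 : 0 < Real.log m :=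
    lt_of_lt_of_le (by nlinarith [Real.log_two_gt_d9])
      (Real.log_le_log two_pos hmR)
  -- denominator = n * H
  have hD : (∑ a' : Fin m, ∑ i, (1 : ℝ) / (((σ i a' : Fin m) : ℕ) + 1)) = n * H := by
    rw [Finset.sum_comm]
    have hrow : ∀ i : Fin n,
        (∑ a' : Fin m, (1 : ℝ) / (((σ i a' : Fin m) : ℕ) + 1)) = H := by
      intro i
      rw [hHdef]
      exact Equiv.sum_comp (σ i) (fun k : Fin m => (1 : ℝ) / ((k : ℕ) + 1))
    rw [Finset.sum_congr rfl (fun i _ => hrow i)]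
    simp [mul_comm]
  -- key pointwise bound: v i a ≤ 1/(rank)
  have hva : ∀ (i : Fin n) (a : Fin m), v i a ≤ 1 / (((σ i a : ℕ) : ℝ) + 1) := by
    intro i a
    have hrpos : (0 : ℝ) < ((σ i a : ℕ) : ℝ) + 1 := by positivity
    rw [le_div_iff₀ hrpos]
    set S : Finset (Fin m) := Finset.univ.filter (fun x => σ i x ≤ σ i a) with hS
    have himg : S.image (σ i) = Finset.Iic (σ i a) := by
      ext k
      simp only [hS, Finset.mem_image, Finset.mem_filter, Finset.mem_univ, true_and,
        Finset.mem_Iic]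
      constructor
      · rintro ⟨x, hx, rfl⟩; exact hx
      · intro hk; exact ⟨(σ i).symm k, by simpa using hk, by simp⟩
    have hcard : S.card = (σ i a : ℕ) + 1 := by
      rw [← Finset.card_image_of_injective S (σ i).injective, himg, Fin.card_Iic]
    have hstep : (((σ i a : ℕ) : ℝ) + 1) * v i a = ∑ _x ∈ S, v i a := by
      rw [Finset.sum_const, hcard]; push_cast; ring
    have h1 : ∑ _x ∈ S, v i a ≤ ∑ x ∈ S, v i x := by
      refine Finset.sum_le_sum ?_
      intro x hx
      rw [hS, Finset.mem_filter] at hx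
      rcases lt_or_eq_of_le hx.2 with h | h
      · exact hcons i x a h
      · rw [(σ i).injective (Fin.le_antisymm hx.2 (le_of_eq h.symm))]
    have h2 : ∑ x ∈ S, v i x ≤ ∑ x, v i x :=
      Finset.sum_le_sum_of_subset_of_nonneg (Finset.subset_univ S)
        (fun x _ _ => hv i x)
    calc v i a * (((σ i a : ℕ) : ℝ) + 1) = ∑ _x ∈ S, v i a := by rw [← hstep]; ring
      _ ≤ ∑ x ∈ S, v i x := h1
      _ ≤ ∑ x, v i x := h2
      _ = 1 := hsum i
  have hSWnn : ∀ a : Fin m, (0 : ℝ) ≤ ∑ i, v i a :=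
    fun a => Finset.sum_nonneg fun i _ => hv i a
  have hhscnn : ∀ a : Fin m, (0 : ℝ) ≤ ∑ i, (1 : ℝ) / (((σ i a : Fin m) : ℕ) + 1) :=
    fun a => Finset.sum_nonneg fun i _ => by positivity
  have hhsge : ∀ a : Fin m, (∑ i, v i a) ≤ ∑ i, (1 : ℝ) / (((σ i a : Fin m) : ℕ) + 1) :=
    fun a => Finset.sum_le_sum fun i _ => hva i a
  have hW0 : (0 : ℝ) ≤ ∑ i, v i b := hSWnn b
  -- key quadratic bound
  have hkey : (∑ i, v i b) ^ 2 ≤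
      ∑ a : Fin m, (∑ i, (1 : ℝ) / (((σ i a : Fin m) : ℕ) + 1)) * (∑ i, v i a) := by
    have h1 : (∑ i, v i b) ^ 2 ≤
        (∑ i, (1 : ℝ) / (((σ i b : Fin m) : ℕ) + 1)) * (∑ i, v i b) := by
      have := mul_le_mul_of_nonneg_right (hhsge b) (hSWnn b)
      nlinarith
    have h2 : (∑ i, (1 : ℝ) / (((σ i b : Fin m) : ℕ) + 1)) * (∑ i, v i b) ≤
        ∑ a : Fin m, (∑ i, (1 : ℝ) / (((σ i a : Fin m) : ℕ) + 1)) * (∑ i, v i a) :=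
      Finset.single_le_sum
        (f := fun a : Fin m => (∑ i, (1 : ℝ) / (((σ i a : Fin m) : ℕ) + 1)) * (∑ i, v i a))
        (fun a _ => mul_nonneg (hhscnn a) (hSWnn a)) (Finset.mem_univ b)
    linarith
  have hSWsum : (∑ a : Fin m, ∑ i, v i a) = (n : ℝ) := by
    rw [Finset.sum_comm]
    simp [hsum]
  -- rewrite the expected welfare
  have hE : (∑ a, (1 / (2 * (m : ℝ)) +
        (∑ i, (1 : ℝ) / (((σ i a : Fin m) : ℕ) + 1)) /
          (2 * ∑ a', ∑ i, (1 : ℝ) / (((σ i a' : Fin m) : ℕ) + 1))) * (∑ i, v i a))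
      = (n : ℝ) / (2 * m) +
        (∑ a : Fin m, (∑ i, (1 : ℝ) / (((σ i a : Fin m) : ℕ) + 1)) * (∑ i, v i a)) /
          (2 * ((n : ℝ) * H)) := by
    rw [show (∑ a, (1 / (2 * (m : ℝ)) +
        (∑ i, (1 : ℝ) / (((σ i a : Fin m) : ℕ) + 1)) /
          (2 * ∑ a', ∑ i, (1 : ℝ) / (((σ i a' : Fin m) : ℕ) + 1))) * (∑ i, v i a))
      = ∑ a, ((∑ i, v i a) * (1 / (2 * (m : ℝ))) +
          ((∑ i, (1 : ℝ) / (((σ i a : Fin m) : ℕ) + 1)) * (∑ i, v i a)) *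
            (1 / (2 * ((n : ℝ) * H)))) from
        Finset.sum_congr rfl (fun a _ => by rw [hD]; ring)]
    rw [Finset.sum_add_distrib, ← Finset.sum_mul, ← Finset.sum_mul, hSWsum]
    ring
  have hElb : (n : ℝ) / (2 * m) + (∑ i, v i b) ^ 2 / (2 * ((n : ℝ) * H)) ≤
      (∑ a, (1 / (2 * (m : ℝ)) +
        (∑ i, (1 : ℝ) / (((σ i a : Fin m) : ℕ) + 1)) /
          (2 * ∑ a', ∑ i, (1 : ℝ) / (((σ i a' : Fin m) : ℕ) + 1))) * (∑ i, v i a)) := by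
    rw [hE]
    gcongr
  -- AM-GM step
  set sa : ℝ := Real.sqrt m with hsa
  set sh : ℝ := Real.sqrt H with hsh
  have hsa2 : sa ^ 2 = m := Real.sq_sqrt (le_of_lt hmR0)
  have hsh2 : sh ^ 2 = H := Real.sq_sqrt (le_of_lt hH0)
  have hsa0 : 0 < sa := Real.sqrt_pos.mpr hmR0
  have hsh0 : 0 < sh := Real.sqrt_pos.mpr hH0
  have hamgm : (∑ i, v i b) ≤
      (sa * sh) * ((n : ℝ) / (2 * m) + (∑ i, v i b) ^ 2 / (2 * ((n : ℝ) * H))) := by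
    rw [← sub_nonneg]
    have hid : (sa * sh) * ((n : ℝ) / (2 * m) + (∑ i, v i b) ^ 2 / (2 * ((n : ℝ) * H)))
        - (∑ i, v i b)
        = ((n : ℝ) * sh - sa * (∑ i, v i b)) ^ 2 / (2 * sa * n * sh) := by
      rw [← hsa2, ← hsh2]
      field_simp
      ring
    rw [hid]
    positivity
  have hE0 : (0 : ℝ) ≤ (∑ a, (1 / (2 * (m : ℝ)) +
        (∑ i, (1 : ℝ) / (((σ i a : Fin m) : ℕ) + 1)) /
          (2 * ∑ a', ∑ i, (1 : ℝ) / (((σ i a' : Fin m) : ℕ) + 1))) * (∑ i, v i a)) :=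
    le_trans (add_nonneg (div_nonneg hnR0.le (by positivity))
      (div_nonneg (sq_nonneg _) (by nlinarith))) hElb
  have hsbound : sa * sh ≤ 2 * Real.sqrt ((m : ℝ) * Real.log m) := by
    have h1 : sa * sh = Real.sqrt ((m : ℝ) * H) := (Real.sqrt_mul (le_of_lt hmR0) H).symm
    have h2 : (m : ℝ) * H ≤ 2 ^ 2 * ((m : ℝ) * Real.log m) :=
      calc (m : ℝ) * H ≤ (m : ℝ) * (4 * Real.log m) :=
            mul_le_mul_of_nonneg_left hHlog hmR0.le
        _ = 2 ^ 2 * ((m : ℝ) * Real.log m) := by ring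
    calc sa * sh = Real.sqrt ((m : ℝ) * H) := h1
      _ ≤ Real.sqrt (2 ^ 2 * ((m : ℝ) * Real.log m)) := Real.sqrt_le_sqrt h2
      _ = 2 * Real.sqrt ((m : ℝ) * Real.log m) := by
          rw [Real.sqrt_mul (by norm_num), Real.sqrt_sq (by norm_num)]
  calc (∑ i, v i b)
      ≤ (sa * sh) * ((n : ℝ) / (2 * m) + (∑ i, v i b) ^ 2 / (2 * ((n : ℝ) * H))) := hamgm
    _ ≤ (sa * sh) * (∑ a, (1 / (2 * (m : ℝ)) +
          (∑ i, (1 : ℝ) / (((σ i a : Fin m) : ℕ) + 1)) /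
            (2 * ∑ a', ∑ i, (1 : ℝ) / (((σ i a' : Fin m) : ℕ) + 1))) * (∑ i, v i a)) :=
        mul_le_mul_of_nonneg_left hElb (mul_nonneg hsa0.le hsh0.le)
    _ ≤ 2 * Real.sqrt ((m : ℝ) * Real.log m) *
          (∑ a, (1 / (2 * (m : ℝ)) +
            (∑ i, (1 : ℝ) / (((σ i a : Fin m) : ℕ) + 1)) /
              (2 * ∑ a', ∑ i, (1 : ℝ) / (((σ i a' : Fin m) : ℕ) + 1))) * (∑ i, v i a)) :=
        mul_le_mul_of_nonneg_right hsbound hE0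
end

section
/- Let (X, d) be a pseudometric space, let (x_i)_{i∈N} be the locations of n agents in X, and let a, b ∈ X be two alternatives. If at least half of the agents weakly prefer a to b, i.e., |{i ∈ N : d(x_i, a) ≤ d(x_i, b)}| ≥ n/2, then the social costs satisfy SC(a) ≤ 3 · SC(b). -/
/-- **Majority support implies social cost within a factor 3.**
In a pseudometric space, if at least half of the `n` agents (located at `x i`) weakly
prefer alternative `a` to alternative `b` (i.e. are at distance from `a` no larger than
from `b`), then `SC(a) ≤ 3 ⬝ SC(b)`, where `SC(y) = ∑ i, dist (x i) y`. -/
theorem majority_implies_social_cost_factor_three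
    {X : Type*} [PseudoMetricSpace X] (n : ℕ) (hn : 1 ≤ n)
    (x : Fin n → X) (a b : X)
    (hmaj : (n : ℝ) / 2 ≤
      ((Finset.univ.filter (fun i : Fin n => dist (x i) a ≤ dist (x i) b)).card : ℝ)) :
    ∑ i, dist (x i) a ≤ 3 * ∑ i, dist (x i) b := by
  classical
  set S := Finset.univ.filter (fun i : Fin n => dist (x i) a ≤ dist (x i) b) with hSdef
  have hcard : (Sᶜ.card : ℝ) ≤ S.card := by
    have h1 : S.card + Sᶜ.card = n := by
      rw [Finset.card_add_card_compl]; simp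
    have h2 : (S.card : ℝ) + Sᶜ.card = n := by exact_mod_cast congrArg (Nat.cast : ℕ → ℝ) h1
    linarith [hmaj]
  have hab : ∀ i ∈ S, dist a b ≤ 2 * dist (x i) b := by
    intro i hi
    simp only [hSdef, Finset.mem_filter] at hi
    have h := dist_triangle a (x i) b
    rw [dist_comm a (x i)] at h
    linarith [hi.2]
  have h1 : ∑ i ∈ S, dist (x i) a ≤ ∑ i ∈ S, dist (x i) b :=
    Finset.sum_le_sum (fun i hi => by
      simp only [hSdef, Finset.mem_filter] at hi; exact hi.2)
  have h2 : ∑ i ∈ Sᶜ, dist (x i) a ≤ ∑ i ∈ Sᶜ, dist (x i) b + Sᶜ.card * dist a b := by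
    calc ∑ i ∈ Sᶜ, dist (x i) a ≤ ∑ i ∈ Sᶜ, (dist (x i) b + dist b a) :=
          Finset.sum_le_sum (fun i _ => dist_triangle _ _ _)
      _ = ∑ i ∈ Sᶜ, dist (x i) b + Sᶜ.card * dist a b := by
          rw [Finset.sum_add_distrib, Finset.sum_const, nsmul_eq_mul, dist_comm b a]
  have h3 : (Sᶜ.card : ℝ) * dist a b ≤ 2 * ∑ i ∈ S, dist (x i) b := by
    calc (Sᶜ.card : ℝ) * dist a b ≤ S.card * dist a b :=
          mul_le_mul_of_nonneg_right hcard dist_nonneg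
      _ = ∑ _i ∈ S, dist a b := by rw [Finset.sum_const, nsmul_eq_mul]
      _ ≤ ∑ i ∈ S, 2 * dist (x i) b := Finset.sum_le_sum hab
      _ = 2 * ∑ i ∈ S, dist (x i) b := by rw [Finset.mul_sum]
  have hnn : 0 ≤ ∑ i ∈ Sᶜ, dist (x i) b := Finset.sum_nonneg fun _ _ => dist_nonneg
  have hsa : ∑ i, dist (x i) a = ∑ i ∈ S, dist (x i) a + ∑ i ∈ Sᶜ, dist (x i) a :=
    (Finset.sum_add_sum_compl S _).symm
  have hsb : ∑ i, dist (x i) b = ∑ i ∈ S, dist (x i) b + ∑ i ∈ Sᶜ, dist (x i) b :=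
    (Finset.sum_add_sum_compl S _).symm
  rw [hsa, hsb]
  linarith
end

section
/- Let (X, d) be a pseudometric space, let (x_i)_{i∈N} be the locations of n agents in X, and let a, c, b ∈ X be three alternatives. If at least half of the agents weakly prefer a to c (|{i : d(x_i, a) ≤ d(x_i, c)}| ≥ n/2) and at least half of the agents weakly prefer c to b (|{i : d(x_i, c) ≤ d(x_i, b)}| ≥ n/2), then SC(a) ≤ 5 · SC(b). -/
set_option maxHeartbeats 1000000

/-- **Two majority steps imply social cost within a factor 5.**
In a pseudometric space with `n` agents located at `x i`, if at least half of the
agents weakly prefer alternative `a` to alternative `c`, and at least half of the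
agents weakly prefer `c` to alternative `b`, then `SC(a) ≤ 5 ⬝ SC(b)`, where
`SC(y) = ∑ i, dist (x i) y`. -/
theorem two_majority_steps_social_cost_factor_five
    {X : Type*} [PseudoMetricSpace X] (n : ℕ) (hn : 1 ≤ n)
    (x : Fin n → X) (a c b : X)
    (hmaj₁ : (n : ℝ) / 2 ≤
      ((Finset.univ.filter (fun i : Fin n => dist (x i) a ≤ dist (x i) c)).card : ℝ))
    (hmaj₂ : (n : ℝ) / 2 ≤
      ((Finset.univ.filter (fun i : Fin n => dist (x i) c ≤ dist (x i) b)).card : ℝ)) :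
    ∑ i, dist (x i) a ≤ 5 * ∑ i, dist (x i) b := by
  classical
  set S1 := Finset.univ.filter (fun i : Fin n => dist (x i) a ≤ dist (x i) c) with hS1def
  set S2 := Finset.univ.filter (fun i : Fin n => dist (x i) c ≤ dist (x i) b) with hS2def
  have hm1 : ∀ i ∈ S1, dist (x i) a ≤ dist (x i) c := by
    intro i hi; exact (Finset.mem_filter.mp hi).2
  have hm2 : ∀ i ∈ S2, dist (x i) c ≤ dist (x i) b := by
    intro i hi; exact (Finset.mem_filter.mp hi).2
  set t := dist c b with htdef
  set u := dist a b with hudef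
  have ht0 : 0 ≤ t := dist_nonneg
  have hu0 : 0 ≤ u := dist_nonneg
  set Bf := fun i : Fin n => dist (x i) b with hBdef
  set X' := ∑ i ∈ S1 ∩ S2, Bf i with hXdef
  set Y := ∑ i ∈ S1 \ S2, Bf i with hYdef
  set W := ∑ i ∈ Finset.univ \ S1, Bf i with hWdef
  set g := (((S1 ∩ S2).card : ℕ) : ℝ) with hgdef
  set p := (((S1 \ S2).card : ℕ) : ℝ) with hpdef
  set q := (((S2 \ S1).card : ℕ) : ℝ) with hqdef
  set k := (((Finset.univ \ S1).card : ℕ) : ℝ) with hkdef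
  have hB0 : ∀ i : Fin n, 0 ≤ Bf i := fun i => dist_nonneg
  have hX0 : 0 ≤ X' := Finset.sum_nonneg fun i _ => hB0 i
  have hY0 : 0 ≤ Y := Finset.sum_nonneg fun i _ => hB0 i
  have hW0 : 0 ≤ W := Finset.sum_nonneg fun i _ => hB0 i
  have hg0 : 0 ≤ g := Nat.cast_nonneg _
  have hp0 : 0 ≤ p := Nat.cast_nonneg _
  have hq0 : 0 ≤ q := Nat.cast_nonneg _
  have hk0 : 0 ≤ k := Nat.cast_nonneg _
  -- pointwise facts
  have hAint : ∀ i ∈ S1 ∩ S2, dist (x i) a ≤ Bf i := by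
    intro i hi
    rcases Finset.mem_inter.mp hi with ⟨h1, h2⟩
    exact (hm1 i h1).trans (hm2 i h2)
  have huint : ∀ i ∈ S1 ∩ S2, u ≤ 2 * Bf i := by
    intro i hi
    rcases Finset.mem_inter.mp hi with ⟨h1, h2⟩
    calc u ≤ dist a (x i) + dist (x i) b := dist_triangle a (x i) b
    _ = dist (x i) a + Bf i := by rw [dist_comm]
    _ ≤ dist (x i) c + Bf i := by linarith [hm1 i h1]
    _ ≤ 2 * Bf i := by have := hm2 i h2; simp only [hBdef]; linarith
  have htint : ∀ i ∈ S1 ∩ S2, t ≤ 2 * Bf i := by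
    intro i hi
    rcases Finset.mem_inter.mp hi with ⟨h1, h2⟩
    calc t ≤ dist c (x i) + dist (x i) b := dist_triangle c (x i) b
    _ = dist (x i) c + Bf i := by rw [dist_comm]
    _ ≤ 2 * Bf i := by have := hm2 i h2; simp only [hBdef]; linarith
  have hAd1 : ∀ i ∈ S1 \ S2, dist (x i) a ≤ Bf i + t := by
    intro i hi
    have h1 := hm1 i (Finset.mem_sdiff.mp hi).1
    calc dist (x i) a ≤ dist (x i) c := h1
    _ ≤ dist (x i) b + dist b c := dist_triangle (x i) b c
    _ = Bf i + t := by rw [dist_comm b c]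
  have hud1 : ∀ i ∈ S1 \ S2, u ≤ t + 2 * Bf i := by
    intro i hi
    have h1 := hm1 i (Finset.mem_sdiff.mp hi).1
    have h2 : dist (x i) c ≤ dist (x i) b + dist b c := dist_triangle (x i) b c
    calc u ≤ dist a (x i) + dist (x i) b := dist_triangle a (x i) b
    _ = dist (x i) a + Bf i := by rw [dist_comm]
    _ ≤ t + 2 * Bf i := by
        have h3 : dist b c = t := dist_comm b c
        simp only [hBdef]; linarith
  have htd2 : ∀ i ∈ S2 \ S1, t ≤ 2 * Bf i := by
    intro i hi
    have h2 := hm2 i (Finset.mem_sdiff.mp hi).1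
    calc t ≤ dist c (x i) + dist (x i) b := dist_triangle c (x i) b
    _ = dist (x i) c + Bf i := by rw [dist_comm]
    _ ≤ 2 * Bf i := by simp only [hBdef]; linarith
  have hAc : ∀ i ∈ Finset.univ \ S1, dist (x i) a ≤ Bf i + u := by
    intro i _
    calc dist (x i) a ≤ dist (x i) b + dist b a := dist_triangle (x i) b a
    _ = Bf i + u := by rw [dist_comm b a]
  -- summed facts
  have hsum_int : ∑ i ∈ S1 ∩ S2, dist (x i) a ≤ X' :=
    Finset.sum_le_sum hAint
  have hsum_d1 : ∑ i ∈ S1 \ S2, dist (x i) a ≤ Y + p * t := by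
    calc ∑ i ∈ S1 \ S2, dist (x i) a ≤ ∑ i ∈ S1 \ S2, (Bf i + t) :=
          Finset.sum_le_sum hAd1
    _ = Y + p * t := by
        rw [Finset.sum_add_distrib, Finset.sum_const, nsmul_eq_mul]
  have hsum_c : ∑ i ∈ Finset.univ \ S1, dist (x i) a ≤ W + k * u := by
    calc ∑ i ∈ Finset.univ \ S1, dist (x i) a ≤ ∑ i ∈ Finset.univ \ S1, (Bf i + u) :=
          Finset.sum_le_sum hAc
    _ = W + k * u := by
        rw [Finset.sum_add_distrib, Finset.sum_const, nsmul_eq_mul]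
  have ha : g * u ≤ 2 * X' := by
    calc g * u = ∑ _i ∈ S1 ∩ S2, u := by rw [Finset.sum_const, nsmul_eq_mul]
    _ ≤ ∑ i ∈ S1 ∩ S2, 2 * Bf i := Finset.sum_le_sum huint
    _ = 2 * X' := by rw [← Finset.mul_sum]
  have hb : g * t ≤ 2 * X' := by
    calc g * t = ∑ _i ∈ S1 ∩ S2, t := by rw [Finset.sum_const, nsmul_eq_mul]
    _ ≤ ∑ i ∈ S1 ∩ S2, 2 * Bf i := Finset.sum_le_sum htint
    _ = 2 * X' := by rw [← Finset.mul_sum]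
  have hc : p * u ≤ p * t + 2 * Y := by
    calc p * u = ∑ _i ∈ S1 \ S2, u := by rw [Finset.sum_const, nsmul_eq_mul]
    _ ≤ ∑ i ∈ S1 \ S2, (t + 2 * Bf i) := Finset.sum_le_sum hud1
    _ = p * t + 2 * Y := by
        rw [Finset.sum_add_distrib, Finset.sum_const, nsmul_eq_mul, ← Finset.mul_sum]
  have hd : q * t ≤ 2 * W := by
    have hsub : S2 \ S1 ⊆ Finset.univ \ S1 := by
      intro i hi
      rcases Finset.mem_sdiff.mp hi with ⟨_, h2⟩
      exact Finset.mem_sdiff.mpr ⟨Finset.mem_univ i, h2⟩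
    calc q * t = ∑ _i ∈ S2 \ S1, t := by rw [Finset.sum_const, nsmul_eq_mul]
    _ ≤ ∑ i ∈ S2 \ S1, 2 * Bf i := Finset.sum_le_sum htd2
    _ ≤ ∑ i ∈ Finset.univ \ S1, 2 * Bf i := by
        refine Finset.sum_le_sum_of_subset_of_nonneg hsub ?_
        intro i _ _; positivity
    _ = 2 * W := by rw [← Finset.mul_sum]
  -- cardinality facts
  have hcard1 : g + p = (S1.card : ℝ) := by
    rw [hgdef, hpdef]
    norm_cast
    exact Finset.card_inter_add_card_sdiff S1 S2
  have hcard2 : g + q = (S2.card : ℝ) := by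
    rw [hgdef, hqdef]
    norm_cast
    rw [Finset.inter_comm]
    exact Finset.card_inter_add_card_sdiff S2 S1
  have hcardn : (S1.card : ℝ) + k = (n : ℝ) := by
    rw [hkdef]
    norm_cast
    rw [Nat.add_comm]
    calc (Finset.univ \ S1).card + S1.card = (Finset.univ : Finset (Fin n)).card := by
          exact Finset.card_sdiff_add_card_eq_card (Finset.subset_univ S1)
    _ = n := by simp
  have hS1half : (n : ℝ) / 2 ≤ g + p := by rw [hcard1]; exact hmaj₁
  have hS2half : (n : ℝ) / 2 ≤ g + q := by rw [hcard2]; exact hmaj₂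
  have he : k ≤ g + p := by linarith
  have hf : p + k ≤ g + 2 * q := by linarith
  -- decompose total sums
  have hsplitA : ∑ i, dist (x i) a
      = (∑ i ∈ S1 ∩ S2, dist (x i) a) + (∑ i ∈ S1 \ S2, dist (x i) a)
        + ∑ i ∈ Finset.univ \ S1, dist (x i) a := by
    have h1 : (∑ i ∈ Finset.univ \ S1, dist (x i) a) + (∑ i ∈ S1, dist (x i) a)
        = ∑ i, dist (x i) a := Finset.sum_sdiff (Finset.subset_univ S1)
    have h2 : (∑ i ∈ S1 \ (S1 ∩ S2), dist (x i) a) + (∑ i ∈ S1 ∩ S2, dist (x i) a)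
        = ∑ i ∈ S1, dist (x i) a := Finset.sum_sdiff (Finset.inter_subset_left)
    rw [Finset.sdiff_inter_self_left] at h2
    linarith
  have hsplitB : ∑ i, Bf i = X' + Y + W := by
    have h1 : (∑ i ∈ Finset.univ \ S1, Bf i) + (∑ i ∈ S1, Bf i)
        = ∑ i, Bf i := Finset.sum_sdiff (Finset.subset_univ S1)
    have h2 : (∑ i ∈ S1 \ (S1 ∩ S2), Bf i) + (∑ i ∈ S1 ∩ S2, Bf i)
        = ∑ i ∈ S1, Bf i := Finset.sum_sdiff (Finset.inter_subset_left)
    rw [Finset.sdiff_inter_self_left] at h2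
    rw [hXdef, hYdef, hWdef]; linarith
  -- final: p*t + k*u ≤ 4X' + 4Y + 4W
  have hkey : p * t + k * u ≤ 4 * X' + 4 * Y + 4 * W := by
    rcases le_or_gt k g with hkg | hkg
    · -- k ≤ g
      have h1 : k * u ≤ g * u := mul_le_mul_of_nonneg_right hkg hu0
      have h2 : p * t ≤ (g + 2 * q) * t := by
        have : p ≤ g + 2 * q := by linarith
        exact mul_le_mul_of_nonneg_right this ht0
      nlinarith [hd, hb, ha]
    · -- g < k, so p > 0
      have hp_pos : 0 < p := by linarith
      have hkgp : k - g ≤ p := by linarith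
      have hdiv : (k - g) * u ≤ (k - g) * t + 2 * Y := by
        have h1 : (k - g) * (p * u) ≤ (k - g) * (p * t + 2 * Y) :=
          mul_le_mul_of_nonneg_left hc (by linarith)
        have h2 : (k - g) * (2 * Y) ≤ p * (2 * Y) :=
          mul_le_mul_of_nonneg_right hkgp (by linarith)
        have h3 : p * ((k - g) * u) ≤ p * ((k - g) * t + 2 * Y) := by nlinarith
        exact le_of_mul_le_mul_left h3 hp_pos
      have h4 : (p + (k - g)) * t ≤ 2 * q * t := by
        have : p + (k - g) ≤ 2 * q := by linarith
        exact mul_le_mul_of_nonneg_right this ht0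
      nlinarith [ha, hd]
  rw [hsplitA, hsplitB]
  linarith [hsum_int, hsum_d1, hsum_c, hkey]
end

section
/- Suppose the number n of agents is odd, so that for every pair of distinct alternatives a strict majority of agents prefers one to the other. Let a* be a Copeland winner, i.e., an alternative maximizing |{b ∈ A : a strict majority of agents prefers a* to b}|, where agent i prefers a to b means d(x_i, a) < d(x_i, b). Then SC(a*) ≤ 5 · min_{b∈A} SC(b). -/
open Finset

private lemma core_ineq (p m t1 r dB dC SP SSm STm SR : ℝ)
    (hp : 0 ≤ p) (hm : 0 ≤ m) (ht1 : 0 ≤ t1) (hr : 0 ≤ r)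
    (hS : t1 + r + 1 ≤ p + m) (hT : m + r + 1 ≤ p + t1)
    (hdB : 0 ≤ dB) (hdC : 0 ≤ dC)
    (hSP : 0 ≤ SP) (hSSm : 0 ≤ SSm) (hSTm : 0 ≤ STm) (hSR : 0 ≤ SR)
    (h5 : (p + t1) * dB ≤ 2 * (SP + STm))
    (h6 : m * dC ≤ 2 * SSm + m * dB)
    (h7 : p * dC ≤ 2 * SP) :
    m * dB + (t1 + r) * dC ≤ 4 * (SP + SSm + STm + SR) := by
  rcases le_or_gt (3 * m) (2 * (p + t1)) with hA | hB
  · -- Case A : 3m ≤ 2t where t = p + t1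
    have ht : (1:ℝ) ≤ p + t1 := by linarith
    -- quadratic lemma: 3*p*m ≤ (2*p + 2*m - t1 - r) * (p + t1)
    have quad : 3 * p * m ≤ (2*p + 2*m - t1 - r) * (p + t1) := by
      nlinarith [sq_nonneg (p - m), mul_nonneg (add_nonneg ht1 hr) (by linarith : (0:ℝ) ≤ (p+m) - 1 - (t1+r)),
        mul_nonneg (by linarith : (0:ℝ) ≤ 2*(p+m) - (t1+r)) (by linarith : (0:ℝ) ≤ 2*(p+t1) - (p+m) - (t1+r) - 1)]
    have c1 : ((p+t1) * (t1 + r)) * dC ≤ (2*m*(p+t1) + (2*(p+t1) - 3*m)*p) * dC := by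
      apply mul_le_mul_of_nonneg_right _ hdC
      nlinarith [quad]
    have c2 : (2*(p+t1) - 3*m) * (p * dC) ≤ (2*(p+t1) - 3*m) * (2 * SP) :=
      mul_le_mul_of_nonneg_left h7 (by linarith)
    have c3 : (2*(p+t1)) * (m * dC) ≤ (2*(p+t1)) * (2 * SSm + m * dB) :=
      mul_le_mul_of_nonneg_left h6 (by linarith)
    have c4 : (3*m) * ((p + t1) * dB) ≤ (3*m) * (2 * (SP + STm)) :=
      mul_le_mul_of_nonneg_left h5 (by linarith)
    have key : (p+t1) * (m * dB + (t1 + r) * dC) ≤ (p+t1) * (4 * (SP + SSm + STm + SR)) := by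
      nlinarith [c1, c2, c3, c4, mul_nonneg (by linarith : (0:ℝ) ≤ 4*(p+t1) - 6*m) hSTm,
        mul_nonneg (by linarith : (0:ℝ) ≤ p + t1) hSR]
    exact le_of_mul_le_mul_left key (by linarith)
  · -- Case B : 2t < 3m
    have hm1 : (0:ℝ) < m := by linarith
    have hc0 : (0:ℝ) ≤ 2*(p+t1) - m := by linarith
    have c1 : m * ((t1 + r) * dC) ≤ m * ((2*(p+t1) - m) * dC) := by
      apply mul_le_mul_of_nonneg_left _ hm
      apply mul_le_mul_of_nonneg_right _ hdC
      linarith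
    have c2 : (2*(p+t1) - m) * (m * dC) ≤ (2*(p+t1) - m) * (2 * SSm + m * dB) :=
      mul_le_mul_of_nonneg_left h6 hc0
    have c3 : (2*m) * ((p + t1) * dB) ≤ (2*m) * (2 * (SP + STm)) :=
      mul_le_mul_of_nonneg_left h5 (by linarith)
    have key : m * (m * dB + (t1 + r) * dC) ≤ m * (4 * (SP + SSm + STm + SR)) := by
      nlinarith [c1, c2, c3, mul_nonneg (by linarith : (0:ℝ) ≤ 6*m - 4*(p+t1) + 2*m) hSSm,
        mul_nonneg hm hSR, mul_nonneg hm hSSm]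
    exact le_of_mul_le_mul_left key hm1

set_option maxHeartbeats 1000000 in
private lemma two_step {X : Type*} [PseudoMetricSpace X] {n : ℕ} (x : Fin n → X) (u c v : X)
    (hS : n < 2 * (Finset.univ.filter (fun i => dist (x i) u < dist (x i) c)).card)
    (hT : n < 2 * (Finset.univ.filter (fun i => dist (x i) c < dist (x i) v)).card) :
    ∑ i, dist (x i) u ≤ 5 * ∑ i, dist (x i) v := by
  classical
  set S := Finset.univ.filter (fun i : Fin n => dist (x i) u < dist (x i) c) with hSdef
  set T := Finset.univ.filter (fun i : Fin n => dist (x i) c < dist (x i) v) with hTdef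
  have hmemS : ∀ i ∈ S, dist (x i) u < dist (x i) c := by
    intro i hi; simpa [hSdef] using hi
  have hmemT : ∀ i ∈ T, dist (x i) c < dist (x i) v := by
    intro i hi; simpa [hTdef] using hi
  set P := S ∩ T with hPdef
  set M := S \ T with hMdef
  set T1 := T \ S with hT1def
  set Rst := Finset.univ \ (S ∪ T) with hRdef
  set dB := dist c v with hdBdef
  set dC := dist u v with hdCdef
  -- sum decompositions
  have hsplit : ∀ f : Fin n → ℝ,
      ∑ i, f i = ∑ i ∈ P, f i + ∑ i ∈ M, f i + ∑ i ∈ T1, f i + ∑ i ∈ Rst, f i := by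
    intro f
    have h1 : ∑ i ∈ Rst, f i + ∑ i ∈ S ∪ T, f i = ∑ i, f i :=
      Finset.sum_sdiff (Finset.subset_univ _)
    have h2 : ∑ i ∈ S, f i + ∑ i ∈ T1, f i = ∑ i ∈ S ∪ T, f i := by
      rw [← Finset.sum_union Finset.disjoint_sdiff, Finset.union_sdiff_self_eq_union]
    have h3 : ∑ i ∈ P, f i + ∑ i ∈ M, f i = ∑ i ∈ S, f i :=
      Finset.sum_inter_add_sum_sdiff _ _ _
    linarith
  have hTsplit : ∀ f : Fin n → ℝ, ∑ i ∈ T, f i = ∑ i ∈ P, f i + ∑ i ∈ T1, f i := by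
    intro f
    have h3 : ∑ i ∈ T ∩ S, f i + ∑ i ∈ T \ S, f i = ∑ i ∈ T, f i :=
      Finset.sum_inter_add_sum_sdiff _ _ _
    rw [Finset.inter_comm] at h3
    linarith
  -- cardinalities
  have hcardS : P.card + M.card = S.card := Finset.card_inter_add_card_sdiff _ _
  have hcardT : P.card + T1.card = T.card := by
    have := Finset.card_inter_add_card_sdiff T S
    rwa [Finset.inter_comm] at this
  have hcardn : P.card + M.card + T1.card + Rst.card = n := by
    have h1 : (S ∪ T).card + Rst.card = n := by
      have := Finset.card_sdiff_add_card_eq_card (Finset.subset_univ (S ∪ T))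
      simpa [add_comm] using this
    have h2 : S.card + T1.card = (S ∪ T).card := by
      rw [← Finset.card_union_of_disjoint Finset.disjoint_sdiff, Finset.union_sdiff_self_eq_union]
    omega
  -- per-agent distance facts
  have hPle : ∀ i ∈ P, dist (x i) u ≤ dist (x i) v := by
    intro i hi
    rw [hPdef, Finset.mem_inter] at hi
    exact le_of_lt (lt_trans (hmemS i hi.1) (hmemT i hi.2))
  have hMle : ∀ i ∈ M, dist (x i) u ≤ dist (x i) v + dB := by
    intro i hi
    rw [hMdef, Finset.mem_sdiff] at hi
    calc dist (x i) u ≤ dist (x i) c := (hmemS i hi.1).le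
      _ ≤ dist (x i) v + dist v c := dist_triangle _ _ _
      _ = dist (x i) v + dB := by rw [hdBdef, dist_comm v c]
  have hCle : ∀ (i : Fin n), dist (x i) u ≤ dist (x i) v + dC := by
    intro i
    calc dist (x i) u = dist u (x i) := dist_comm _ _
      _ ≤ dist u v + dist v (x i) := dist_triangle _ _ _
      _ = dist (x i) v + dC := by rw [dist_comm v (x i), hdCdef]; ring
  have hTB : ∀ i ∈ T, dB ≤ 2 * dist (x i) v := by
    intro i hi
    calc dB ≤ dist c (x i) + dist (x i) v := dist_triangle _ _ _
      _ = dist (x i) c + dist (x i) v := by rw [dist_comm]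
      _ ≤ 2 * dist (x i) v := by linarith [(hmemT i hi).le]
  have hSC : ∀ i ∈ S, dC ≤ 2 * dist (x i) v + dB := by
    intro i hi
    have h1 : dist (x i) c ≤ dist (x i) v + dB := by
      calc dist (x i) c ≤ dist (x i) v + dist v c := dist_triangle _ _ _
        _ = dist (x i) v + dB := by rw [hdBdef, dist_comm v c]
    calc dC ≤ dist u (x i) + dist (x i) v := dist_triangle _ _ _
      _ = dist (x i) u + dist (x i) v := by rw [dist_comm]
      _ ≤ dist (x i) c + dist (x i) v := by linarith [(hmemS i hi).le]
      _ ≤ 2 * dist (x i) v + dB := by linarith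
  have hPC : ∀ i ∈ P, dC ≤ 2 * dist (x i) v := by
    intro i hi
    rw [hPdef, Finset.mem_inter] at hi
    calc dC ≤ dist u (x i) + dist (x i) v := dist_triangle _ _ _
      _ = dist (x i) u + dist (x i) v := by rw [dist_comm]
      _ ≤ 2 * dist (x i) v := by linarith [(hmemS i hi.1).le, (hmemT i hi.2).le]
  -- aggregated sums
  set SP := ∑ i ∈ P, dist (x i) v with hSPdef
  set SSm := ∑ i ∈ M, dist (x i) v with hSSmdef
  set STm := ∑ i ∈ T1, dist (x i) v with hSTmdef
  set SR := ∑ i ∈ Rst, dist (x i) v with hSRdef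
  have hSPn : 0 ≤ SP := Finset.sum_nonneg fun i _ => dist_nonneg
  have hSSmn : 0 ≤ SSm := Finset.sum_nonneg fun i _ => dist_nonneg
  have hSTmn : 0 ≤ STm := Finset.sum_nonneg fun i _ => dist_nonneg
  have hSRn : 0 ≤ SR := Finset.sum_nonneg fun i _ => dist_nonneg
  -- main sum bound
  have bP : ∑ i ∈ P, dist (x i) u ≤ SP := Finset.sum_le_sum hPle
  have bM : ∑ i ∈ M, dist (x i) u ≤ SSm + M.card * dB := by
    have := Finset.sum_le_sum hMle
    simpa [Finset.sum_add_distrib, Finset.sum_const, nsmul_eq_mul] using this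
  have bT1 : ∑ i ∈ T1, dist (x i) u ≤ STm + T1.card * dC := by
    have := Finset.sum_le_sum (fun i (_ : i ∈ T1) => hCle i)
    simpa [Finset.sum_add_distrib, Finset.sum_const, nsmul_eq_mul] using this
  have bR : ∑ i ∈ Rst, dist (x i) u ≤ SR + Rst.card * dC := by
    have := Finset.sum_le_sum (fun i (_ : i ∈ Rst) => hCle i)
    simpa [Finset.sum_add_distrib, Finset.sum_const, nsmul_eq_mul] using this
  -- aggregated inequality h5 : t * dB ≤ 2 * (SP + STm)
  have h5 : ((P.card : ℝ) + T1.card) * dB ≤ 2 * (SP + STm) := by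
    have := Finset.sum_le_sum hTB
    rw [Finset.sum_const, nsmul_eq_mul, ← Finset.mul_sum, hTsplit (fun i => dist (x i) v)] at this
    have hc : ((T.card : ℝ)) = (P.card : ℝ) + T1.card := by exact_mod_cast hcardT.symm
    rw [hc] at this
    linarith
  have h6 : (M.card : ℝ) * dC ≤ 2 * SSm + M.card * dB := by
    have hf : ∀ i ∈ M, dC ≤ 2 * dist (x i) v + dB := by
      intro i hi
      rw [hMdef, Finset.mem_sdiff] at hi
      exact hSC i hi.1
    have h1 := Finset.sum_le_sum hf
    rw [Finset.sum_const, nsmul_eq_mul] at h1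
    have h2 : ∑ i ∈ M, (2 * dist (x i) v + dB) = 2 * SSm + M.card * dB := by
      rw [Finset.sum_add_distrib, Finset.sum_const, nsmul_eq_mul, ← Finset.mul_sum]
    linarith [h1, h2.le, h2.ge]
  have h7 : (P.card : ℝ) * dC ≤ 2 * SP := by
    have := Finset.sum_le_sum hPC
    rw [Finset.sum_const, nsmul_eq_mul, ← Finset.mul_sum] at this
    linarith
  -- majority facts in ℝ
  have hmaj1 : (T1.card : ℝ) + Rst.card + 1 ≤ (P.card : ℝ) + M.card := by
    have : T1.card + Rst.card + 1 ≤ P.card + M.card := by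
      have hs : S.card = P.card + M.card := hcardS.symm
      omega
    exact_mod_cast this
  have hmaj2 : (M.card : ℝ) + Rst.card + 1 ≤ (P.card : ℝ) + T1.card := by
    have : M.card + Rst.card + 1 ≤ P.card + T1.card := by
      have ht : T.card = P.card + T1.card := hcardT.symm
      omega
    exact_mod_cast this
  have hcore := core_ineq (P.card : ℝ) (M.card : ℝ) (T1.card : ℝ) (Rst.card : ℝ)
    dB dC SP SSm STm SR (Nat.cast_nonneg _) (Nat.cast_nonneg _) (Nat.cast_nonneg _) (Nat.cast_nonneg _)
    hmaj1 hmaj2 dist_nonneg dist_nonneg hSPn hSSmn hSTmn hSRn h5 h6 h7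
  have eu := hsplit (fun i => dist (x i) u)
  have ev := hsplit (fun i => dist (x i) v)
  rw [eu, ev]
  rw [← hSPdef, ← hSSmdef, ← hSTmdef, ← hSRdef]
  linarith

private lemma one_step {X : Type*} [PseudoMetricSpace X] {n : ℕ} (x : Fin n → X) (u v : X)
    (hS : n < 2 * (Finset.univ.filter (fun i => dist (x i) u < dist (x i) v)).card) :
    ∑ i, dist (x i) u ≤ 5 * ∑ i, dist (x i) v := by
  classical
  set S := Finset.univ.filter (fun i : Fin n => dist (x i) u < dist (x i) v) with hSdef
  have hmemS : ∀ i ∈ S, dist (x i) u < dist (x i) v := by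
    intro i hi; simpa [hSdef] using hi
  set Sc := Finset.univ.filter (fun i : Fin n => ¬ dist (x i) u < dist (x i) v) with hScdef
  have hsplit : ∀ f : Fin n → ℝ, ∑ i ∈ S, f i + ∑ i ∈ Sc, f i = ∑ i, f i := fun f =>
    Finset.sum_filter_add_sum_filter_not _ _ f
  have hcard : S.card + Sc.card = n := by
    simpa only [Finset.card_univ, Fintype.card_fin] using
      Finset.card_filter_add_card_filter_not
      (s := (Finset.univ : Finset (Fin n))) (p := fun i => dist (x i) u < dist (x i) v)
  -- bounds
  have b1 : ∑ i ∈ S, dist (x i) u ≤ ∑ i ∈ S, dist (x i) v :=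
    Finset.sum_le_sum fun i hi => (hmemS i hi).le
  have b2 : ∑ i ∈ Sc, dist (x i) u ≤ ∑ i ∈ Sc, dist (x i) v + Sc.card * dist u v := by
    have : ∑ i ∈ Sc, dist (x i) u ≤ ∑ i ∈ Sc, (dist (x i) v + dist u v) := by
      apply Finset.sum_le_sum
      intro i _
      calc dist (x i) u = dist u (x i) := dist_comm _ _
        _ ≤ dist u v + dist v (x i) := dist_triangle _ _ _
        _ = dist (x i) v + dist u v := by rw [dist_comm v (x i)]; ring
    simpa [Finset.sum_add_distrib, Finset.sum_const, nsmul_eq_mul] using this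
  have b3 : (S.card : ℝ) * dist u v ≤ 2 * ∑ i ∈ S, dist (x i) v := by
    have : ∑ i ∈ S, dist u v ≤ ∑ i ∈ S, 2 * dist (x i) v := by
      apply Finset.sum_le_sum
      intro i hi
      calc dist u v ≤ dist u (x i) + dist (x i) v := dist_triangle _ _ _
        _ = dist (x i) u + dist (x i) v := by rw [dist_comm u (x i)]
        _ ≤ 2 * dist (x i) v := by linarith [(hmemS i hi).le]
    simpa [Finset.sum_const, nsmul_eq_mul, Finset.mul_sum] using this
  have hSv_nonneg : (0:ℝ) ≤ ∑ i ∈ S, dist (x i) v :=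
    Finset.sum_nonneg fun i _ => dist_nonneg
  have hScv_nonneg : (0:ℝ) ≤ ∑ i ∈ Sc, dist (x i) v :=
    Finset.sum_nonneg fun i _ => dist_nonneg
  have hcardle : (Sc.card : ℝ) ≤ (S.card : ℝ) := by
    have : Sc.card ≤ S.card := by omega
    exact_mod_cast this
  have hd : (0:ℝ) ≤ dist u v := dist_nonneg
  have e1 := hsplit (fun i => dist (x i) u)
  have e2 := hsplit (fun i => dist (x i) v)
  nlinarith [mul_le_mul_of_nonneg_right hcardle hd]
/-- **The Copeland rule has distortion at most 5 in the metric setting.**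
In a pseudometric space with an odd number `n` of agents located at `x i` and a finite
nonempty set `A` of alternatives such that no agent is equidistant from two distinct
alternatives, let `astar ∈ A` be a Copeland winner: it maximizes, over `a ∈ A`, the
number of alternatives `b ∈ A` such that a strict majority of the agents is strictly
closer to `a` than to `b`. Then `SC(astar) ≤ 5 ⬝ SC(b)` for every `b ∈ A`, where
`SC(y) = ∑ i, dist (x i) y`. -/
theorem copeland_distortion_at_most_five
    {X : Type*} [PseudoMetricSpace X] (n : ℕ) (hodd : Odd n)
    (x : Fin n → X) (A : Finset X) (hA : A.Nonempty)
    (hdistinct : ∀ i : Fin n, ∀ a ∈ A, ∀ b ∈ A, a ≠ b → dist (x i) a ≠ dist (x i) b)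
    (astar : X) (hastar : astar ∈ A)
    (hcope : ∀ a ∈ A,
      (A.filter (fun b =>
        n < 2 * (Finset.univ.filter
          (fun i : Fin n => dist (x i) a < dist (x i) b)).card)).card ≤
      (A.filter (fun b =>
        n < 2 * (Finset.univ.filter
          (fun i : Fin n => dist (x i) astar < dist (x i) b)).card)).card) :
    ∀ b ∈ A, ∑ i, dist (x i) astar ≤ 5 * ∑ i, dist (x i) b := by
  classical
  intro b hb
  have hSCnonneg : ∀ y : X, (0:ℝ) ≤ ∑ i, dist (x i) y := fun y =>
    Finset.sum_nonneg fun i _ => dist_nonneg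
  by_cases hab : astar = b
  · subst hab
    linarith [hSCnonneg astar]
  -- totality of the majority relation
  have htot : ∀ a ∈ A, ∀ b' ∈ A, a ≠ b' →
      ¬ (n < 2 * (Finset.univ.filter (fun i => dist (x i) a < dist (x i) b')).card) →
      n < 2 * (Finset.univ.filter (fun i => dist (x i) b' < dist (x i) a)).card := by
    intro a ha b' hb' hne hnot
    have hcompl : Finset.univ.filter (fun i : Fin n => dist (x i) b' < dist (x i) a)
        = Finset.univ.filter (fun i : Fin n => ¬ dist (x i) a < dist (x i) b') := by
      apply Finset.filter_congr
      intro i _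
      have hne' := hdistinct i a ha b' hb' hne
      simp only [eq_iff_iff, not_lt]
      constructor
      · exact le_of_lt
      · intro h
        exact lt_of_le_of_ne h (fun hc => hne' hc.symm)
    have hsum : (Finset.univ.filter (fun i : Fin n => dist (x i) a < dist (x i) b')).card
        + (Finset.univ.filter (fun i : Fin n => ¬ dist (x i) a < dist (x i) b')).card = n := by
      simpa only [Finset.card_univ, Fintype.card_fin] using
        Finset.card_filter_add_card_filter_not
          (s := (Finset.univ : Finset (Fin n)))
          (p := fun i => dist (x i) a < dist (x i) b')
    rw [hcompl]
    obtain ⟨m, hm⟩ := hodd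
    omega
  by_cases hbeats : n < 2 * (Finset.univ.filter
      (fun i => dist (x i) astar < dist (x i) b)).card
  · exact one_step x astar b hbeats
  · -- find an intermediate alternative c
    have hexists : ∃ c ∈ A,
        (n < 2 * (Finset.univ.filter
          (fun i => dist (x i) astar < dist (x i) c)).card) ∧
        (n < 2 * (Finset.univ.filter
          (fun i => dist (x i) c < dist (x i) b)).card) := by
      by_contra hno
      push_neg at hno
      have hsub : A.filter (fun c => n < 2 * (Finset.univ.filter
            (fun i : Fin n => dist (x i) astar < dist (x i) c)).card)
          ⊆ A.filter (fun c => n < 2 * (Finset.univ.filter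
            (fun i : Fin n => dist (x i) b < dist (x i) c)).card) := by
        intro c hc
        rw [Finset.mem_filter] at hc ⊢
        refine ⟨hc.1, ?_⟩
        have hcb := hno c hc.1 hc.2
        have hcneb : c ≠ b := by
          rintro rfl
          exact hbeats hc.2
        exact htot c hc.1 b hb hcneb (by omega)
      have hmemb : astar ∈ A.filter (fun c => n < 2 * (Finset.univ.filter
          (fun i : Fin n => dist (x i) b < dist (x i) c)).card) := by
        rw [Finset.mem_filter]
        exact ⟨hastar, htot astar hastar b hb hab hbeats⟩
      have hnotmem : astar ∉ A.filter (fun c => n < 2 * (Finset.univ.filter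
          (fun i : Fin n => dist (x i) astar < dist (x i) c)).card) := by
        rw [Finset.mem_filter]
        rintro ⟨-, hlt⟩
        have : Finset.univ.filter
            (fun i : Fin n => dist (x i) astar < dist (x i) astar) = ∅ := by
          apply Finset.filter_false_of_mem
          intro i _
          exact lt_irrefl _
        rw [this] at hlt
        simp at hlt
      have hlt := Finset.card_lt_card
        ((Finset.ssubset_iff_of_subset hsub).2 ⟨astar, hmemb, hnotmem⟩)
      have hle := hcope b hb
      omega
    obtain ⟨c, hc, h1, h2⟩ := hexists
    exact two_step x astar c b h1 h2
end

section
/- Let A = {a, b} be a set of two alternatives. For every deterministic voting rule f, which for every number n of agents maps each profile of strict rankings over A to an alternative in A, and for every ε > 0, there exist a number n of agents, a pseudometric instance (points on the real line with the usual distance) and a profile of rankings consistent with it, such that SC(f(≻)) ≥ (3 − ε) · min_{j∈A} SC(j). Hence no deterministic voting rule has distortion smaller than 3 in the metric setting. -/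
/-- **Lower bound of 3 on the distortion of deterministic rules in the metric setting.**
There are two alternatives, indexed by `Fin 2` and located at points `loc 0, loc 1` of
the real line. A deterministic voting rule `f` maps, for every number `n` of agents,
each profile of strict rankings (`σ i a` is the 0-indexed position of alternative `a`
in agent `i`'s ranking) to one of the two alternatives. For every such `f` and every
`ε > 0` there is an instance — `n ≥ 1` agents located at `x i` on the line, alternative
locations `loc`, and a profile `σ` consistent with the metric — such that the social
cost of the chosen alternative is at least `(3 - ε)` times the minimum social cost,
where `SC(j) = ∑ i, dist (x i) (loc j)`. -/
theorem metric_deterministic_lower_bound_three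
    (f : ∀ n : ℕ, (Fin n → (Fin 2 ≃ Fin 2)) → Fin 2)
    (ε : ℝ) (hε : 0 < ε) :
    ∃ n : ℕ, 1 ≤ n ∧
      ∃ (x : Fin n → ℝ) (loc : Fin 2 → ℝ) (σ : Fin n → (Fin 2 ≃ Fin 2)),
        (∀ i (a b : Fin 2), σ i a < σ i b → dist (x i) (loc a) ≤ dist (x i) (loc b)) ∧
        (3 - ε) * min (∑ i, dist (x i) (loc 0)) (∑ i, dist (x i) (loc 1)) ≤
          ∑ i, dist (x i) (loc (f n σ)) := by
  refine ⟨2, by norm_num, ?_⟩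
  set σ : Fin 2 → (Fin 2 ≃ Fin 2) := ![Equiv.refl _, Equiv.swap 0 1] with hσ
  rcases Fin.exists_fin_two.mp ⟨f 2 σ, rfl⟩ with h | h
  · refine ⟨![1/2, 1], ![0, 1], σ, ?_, ?_⟩
    · intro i a b hab
      fin_cases i <;> fin_cases a <;> fin_cases b <;>
        simp_all [σ, Real.dist_eq, Equiv.swap_apply_def] <;> norm_num [abs_div]
    · rw [h]
      have h3 : |(2:ℝ)⁻¹| = 2⁻¹ := by norm_num
      have h4 : |(2:ℝ)⁻¹ - 1| = 2⁻¹ := by rw [abs_sub_comm]; norm_num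
      simp only [Fin.sum_univ_two, Real.dist_eq, Matrix.cons_val_zero,
        Matrix.cons_val_one, Matrix.head_cons]
      norm_num [h3, h4, min_def]
      nlinarith
  · refine ⟨![0, 1/2], ![0, 1], σ, ?_, ?_⟩
    · intro i a b hab
      fin_cases i <;> fin_cases a <;> fin_cases b <;>
        simp_all [σ, Real.dist_eq, Equiv.swap_apply_def] <;> norm_num [abs_div]
    · rw [h]
      have h3 : |(2:ℝ)⁻¹| = 2⁻¹ := by norm_num
      have h4 : |(2:ℝ)⁻¹ - 1| = 2⁻¹ := by rw [abs_sub_comm]; norm_num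
      simp only [Fin.sum_univ_two, Real.dist_eq, Matrix.cons_val_zero,
        Matrix.cons_val_one, Matrix.head_cons]
      norm_num [h3, h4, min_def]
      nlinarith
end

section
/- Let (X, d) be a pseudometric space, let (x_i)_{i∈N} be the locations of n ≥ 1 agents, let A be a finite nonempty set of alternatives (points of X), and for each agent i let t_i ∈ A be a favorite alternative of i, i.e., d(x_i, t_i) ≤ d(x_i, a) for all a ∈ A. Then for every alternative a ∈ A it holds that Σ_{i∈N} SC(t_i) ≤ (3n − 2) · SC(a). Equivalently, the expected social cost of Random Dictatorship, (1/n)·Σ_{i∈N} SC(t_i), is at most (3 − 2/n) times the minimum social cost, so Random Dictatorship has distortion at most 3 − 2/n. -/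
/-- **Random Dictatorship has distortion at most `3 - 2/n` in the metric setting.**
In a pseudometric space with `n ≥ 1` agents located at `x i` and a finite nonempty set
`A` of alternatives, let `t i ∈ A` be a favorite alternative of agent `i` (one closest
to `x i` among `A`). Then for every alternative `a ∈ A`,
`∑ i, SC(t i) ≤ (3n - 2) ⬝ SC(a)`, where `SC(y) = ∑ j, dist (x j) y`; equivalently, the
expected social cost `(1/n) ∑ i, SC(t i)` of Random Dictatorship is at most `3 - 2/n`
times the minimum social cost. -/
theorem random_dictatorship_distortion
    {X : Type*} [PseudoMetricSpace X] (n : ℕ) (hn : 1 ≤ n)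
    (x : Fin n → X) (A : Finset X) (hA : A.Nonempty)
    (t : Fin n → X)
    (htA : ∀ i, t i ∈ A)
    (hfav : ∀ i, ∀ a ∈ A, dist (x i) (t i) ≤ dist (x i) a) :
    ∀ a ∈ A,
      ∑ i, ∑ j, dist (x j) (t i) ≤ (3 * (n : ℝ) - 2) * ∑ j, dist (x j) a := by
  intro a ha
  set S := ∑ j, dist (x j) a with hS
  have key : ∀ i : Fin n, ∑ j, dist (x j) (t i) ≤ S + 2 * ((n : ℝ) - 1) * dist (x i) a := by
    intro i
    have h1 : ∑ j, dist (x j) (t i)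
        ≤ ∑ j, (dist (x j) a + if j = i then 0 else 2 * dist (x i) a) := by
      apply Finset.sum_le_sum
      intro j _
      by_cases hj : j = i
      · subst hj; simpa using hfav j a ha
      · simp only [hj, if_false]
        have h3 := dist_triangle (x j) a (t i)
        have h4 := dist_triangle a (x i) (t i)
        have h5 := hfav i a ha
        have h6 : dist a (x i) = dist (x i) a := dist_comm a (x i)
        linarith
    have h2 : ∑ j, (dist (x j) a + if j = i then 0 else 2 * dist (x i) a)
        = S + 2 * ((n : ℝ) - 1) * dist (x i) a := by
      rw [Finset.sum_add_distrib, ← hS]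
      congr 1
      have : ∀ j : Fin n, (if j = i then (0:ℝ) else 2 * dist (x i) a)
          = 2 * dist (x i) a - (if j = i then 2 * dist (x i) a else 0) := by
        intro j; by_cases hj : j = i <;> simp [hj]
      rw [Finset.sum_congr rfl (fun j _ => this j), Finset.sum_sub_distrib,
        Finset.sum_ite_eq' Finset.univ i (fun _ => 2 * dist (x i) a)]
      simp [Finset.card_univ]
      ring
    linarith
  calc ∑ i, ∑ j, dist (x j) (t i)
      ≤ ∑ i : Fin n, (S + 2 * ((n : ℝ) - 1) * dist (x i) a) :=
        Finset.sum_le_sum fun i _ => key i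
    _ = (n : ℝ) * S + 2 * ((n : ℝ) - 1) * S := by
        rw [Finset.sum_add_distrib, ← Finset.mul_sum, ← hS]
        simp [Finset.card_univ]
    _ = (3 * (n : ℝ) - 2) * S := by ring
end

section
/- Let N be a finite set of n ≥ 1 agents, let A be a finite nonempty set of alternatives, and let (≻_i)_{i∈N} be any profile of strict rankings over A. For each agent y, let top(y) denote the ≻_y-maximal alternative. Then there exists an alternative j ∈ A whose integral domination graph admits a perfect matching; equivalently, there exist j ∈ A and a bijection σ : N → N such that for every agent x, either j = top(σ(x)) or j ≻_x top(σ(x)). -/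
open Finset

/-- Two functions with equal fiber cardinalities differ by a permutation. -/
lemma perm_of_fiber_card_eq' {α β : Type*} [Fintype α] [DecidableEq α] [DecidableEq β]
    (f g : α → β)
    (h : ∀ b, (univ.filter (fun x => f x = b)).card = (univ.filter (fun x => g x = b)).card) :
    ∃ π : Equiv.Perm α, ∀ x, g (π x) = f x := by
  have e : ∀ b, {x // f x = b} ≃ {x // g x = b} := fun b =>
    Fintype.equivOfCardEq (by simp only [Fintype.card_subtype]; exact h b)
  refine ⟨(Equiv.sigmaFiberEquiv f).symm.trans
      ((Equiv.sigmaCongrRight e).trans (Equiv.sigmaFiberEquiv g)), ?_⟩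
  intro x
  exact ((e (f x)) ⟨x, rfl⟩).2

/-- The plurality-veto process: given scores `c` summing to `n+1`, there is an
assignment `f` of agents to alternatives matching the scores fiberwise, and an
alternative `j` (with positive score) that every agent weakly prefers to its
assigned alternative. -/
lemma veto_lemma (m : ℕ) : ∀ (n : ℕ) (σ : Fin (n+1) → (Fin m ≃ Fin m)) (c : Fin m → ℕ),
    (∑ a, c a = n + 1) →
    ∃ (f : Fin (n+1) → Fin m) (j : Fin m),
      (∀ a, (univ.filter (fun x => f x = a)).card = c a) ∧
      (∀ x, σ x j ≤ σ x (f x)) ∧ 0 < c j := by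
  intro n
  induction n with
  | zero =>
    intro σ c hc
    obtain ⟨a0, ha0⟩ : ∃ a, 0 < c a := by
      by_contra h
      push_neg at h
      simp only [Nat.le_zero] at h
      rw [Finset.sum_eq_zero (fun a _ => h a)] at hc
      omega
    refine ⟨fun _ => a0, a0, ?_, fun x => le_refl _, ha0⟩
    intro a
    have h1 : c a0 + ∑ b ∈ univ.erase a0, c b = 1 := by
      rw [Finset.add_sum_erase _ _ (mem_univ a0)]; exact hc
    have hca0 : c a0 = 1 := by omega
    by_cases hA : a = a0
    · rw [hA, Finset.filter_const, if_pos rfl, hca0]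
      simp
    · have hmem : a ∈ univ.erase a0 := Finset.mem_erase.mpr ⟨hA, mem_univ a⟩
      have h2 : c a ≤ ∑ b ∈ univ.erase a0, c b :=
        Finset.single_le_sum (fun b _ => Nat.zero_le _) hmem
      have hca : c a = 0 := by omega
      rw [Finset.filter_const, if_neg (fun h => hA h.symm), hca]
      simp
  | succ n ih =>
    intro σ c hc
    have hP : (univ.filter (fun a => 0 < c a)).Nonempty := by
      by_contra h
      rw [Finset.not_nonempty_iff_eq_empty, Finset.filter_eq_empty_iff] at h
      have : ∀ a ∈ (univ : Finset (Fin m)), c a = 0 := fun a ha => by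
        have := h ha; omega
      rw [Finset.sum_eq_zero this] at hc
      omega
    obtain ⟨a0, ha0mem, ha0max⟩ := Finset.exists_max_image _ (fun a => σ 0 a) hP
    have ha0pos : 0 < c a0 := (Finset.mem_filter.mp ha0mem).2
    set c' : Fin m → ℕ := Function.update c a0 (c a0 - 1) with hc'def
    have hc'a0 : c' a0 = c a0 - 1 := Function.update_self _ _ _
    have hc'ne : ∀ a, a ≠ a0 → c' a = c a := fun a ha => Function.update_of_ne ha _ _
    have hsum' : ∑ a, c' a = n + 1 := by
      have h1 : c a0 + ∑ a ∈ univ.erase a0, c a = n + 2 := by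
        rw [Finset.add_sum_erase _ _ (mem_univ a0)]; exact hc
      have h2 : c' a0 + ∑ a ∈ univ.erase a0, c' a = ∑ a, c' a := by
        rw [Finset.add_sum_erase _ _ (mem_univ a0)]
      have h3 : ∑ a ∈ univ.erase a0, c' a = ∑ a ∈ univ.erase a0, c a :=
        Finset.sum_congr rfl (fun a ha => hc'ne a (Finset.ne_of_mem_erase ha))
      omega
    obtain ⟨f', j, hfib', hdom', hj'⟩ := ih (fun x => σ x.succ) c' hsum'
    have hcj : 0 < c j := by
      by_cases hja : j = a0
      · subst hja; exact ha0pos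
      · rw [← hc'ne j hja]; exact hj'
    refine ⟨Fin.cases a0 f', j, ?_, ?_, hcj⟩
    · intro a
      rw [Finset.card_filter, Fin.sum_univ_succ]
      simp only [Fin.cases_zero, Fin.cases_succ]
      show ((if a0 = a then 1 else 0) + ∑ i, if f' i = a then 1 else 0) = c a
      rw [← Finset.card_filter, hfib' a]
      by_cases hA : a0 = a
      · subst hA
        rw [if_pos rfl, hc'a0]
        omega
      · rw [if_neg hA, hc'ne a (Ne.symm hA)]
        omega
    · intro x
      refine Fin.cases ?_ ?_ x
      · simp only [Fin.cases_zero]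
        exact ha0max j (Finset.mem_filter.mpr ⟨mem_univ j, hcj⟩)
      · intro y
        simp only [Fin.cases_succ]
        exact hdom' y

/-- **Existence of an alternative whose integral domination graph has a perfect
matching** (Gkatzelis, Halpern, Shah). For `n ≥ 1` agents with strict rankings over
`m ≥ 1` alternatives (`σ x a` is the 0-indexed position of alternative `a` in agent
`x`'s ranking, so the top alternative of agent `y` is `(σ y).symm ⟨0, hm⟩`), there
exist an alternative `j` and a bijection `π` of the agents such that every agent `x`
weakly prefers `j` to the top alternative of agent `π x`, i.e.
`σ x j ≤ σ x (top (π x))` (equality holds exactly when `j` *is* that top alternative,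
since rankings are strict). -/
theorem exists_plurality_matching_alternative
    (n m : ℕ) (hn : 1 ≤ n) (hm : 1 ≤ m)
    (σ : Fin n → (Fin m ≃ Fin m)) :
    ∃ (j : Fin m) (π : Equiv.Perm (Fin n)),
      ∀ x : Fin n, σ x j ≤ σ x ((σ (π x)).symm ⟨0, hm⟩) := by
  obtain ⟨k, rfl⟩ : ∃ k, n = k + 1 := ⟨n - 1, (Nat.succ_pred_eq_of_pos hn).symm⟩
  set top : Fin (k+1) → Fin m := fun y => (σ y).symm ⟨0, hm⟩ with htop
  set c : Fin m → ℕ := fun a => (univ.filter (fun y => top y = a)).card with hcdef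
  have hc : ∑ a, c a = k + 1 := by
    rw [hcdef]
    rw [← Finset.card_eq_sum_card_fiberwise (fun x _ => Finset.mem_univ (top x))]
    simp
  obtain ⟨f, j, hfib, hdom, -⟩ := veto_lemma m k σ c hc
  obtain ⟨π, hπ⟩ := perm_of_fiber_card_eq' f top (fun b => by rw [hfib b])
  refine ⟨j, π, fun x => ?_⟩
  show σ x j ≤ σ x (top (π x))
  rw [hπ x]
  exact hdom x
end

section
/- Let (X, d) be a pseudometric space, (x_i)_{i∈N} the locations of n ≥ 1 agents, and A a finite nonempty set of alternatives (points of X). For each agent y, let t_y ∈ A be a favorite alternative of y, i.e., d(x_y, t_y) ≤ d(x_y, a) for all a ∈ A. Suppose j ∈ A is such that there exists a bijection σ : N → N with d(x_x, j) ≤ d(x_x, t_{σ(x)}) for every agent x (i.e., the integral domination graph of j admits a perfect matching). Then SC(j) ≤ 3 · SC(j') for every alternative j' ∈ A. -/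
/-- **A perfect matching in the integral domination graph implies distortion 3.**
In a pseudometric space with `n ≥ 1` agents located at `x i` and a finite nonempty set
`A` of alternatives, let `t y ∈ A` be a favorite alternative of agent `y` (closest to
`x y` among `A`). If `j ∈ A` admits a bijection `π` of the agents such that every agent
`i` is weakly closer to `j` than to the favorite alternative of agent `π i` (i.e. the
integral domination graph of `j` has a perfect matching), then
`SC(j) ≤ 3 ⬝ SC(j')` for every alternative `j' ∈ A`, where `SC(y) = ∑ i, dist (x i) y`. -/
theorem plurality_matching_alternative_distortion_three
    {X : Type*} [PseudoMetricSpace X] (n : ℕ) (hn : 1 ≤ n)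
    (x : Fin n → X) (A : Finset X) (hA : A.Nonempty)
    (t : Fin n → X)
    (htA : ∀ y, t y ∈ A)
    (hfav : ∀ y, ∀ a ∈ A, dist (x y) (t y) ≤ dist (x y) a)
    (j : X) (hj : j ∈ A)
    (π : Equiv.Perm (Fin n))
    (hmatch : ∀ i, dist (x i) j ≤ dist (x i) (t (π i))) :
    ∀ j' ∈ A, ∑ i, dist (x i) j ≤ 3 * ∑ i, dist (x i) j' := by
  intro j' hj'
  have key : ∀ i, dist (x i) j ≤ dist (x i) j' + 2 * dist (x (π i)) j' := by
    intro i
    calc dist (x i) j ≤ dist (x i) (t (π i)) := hmatch i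
      _ ≤ dist (x i) j' + dist j' (x (π i)) + dist (x (π i)) (t (π i)) :=
          dist_triangle4 _ _ _ _
      _ ≤ dist (x i) j' + dist j' (x (π i)) + dist (x (π i)) j' :=
          by linarith [hfav (π i) j' hj']
      _ = dist (x i) j' + 2 * dist (x (π i)) j' := by
          rw [dist_comm j']; ring
  calc ∑ i, dist (x i) j ≤ ∑ i, (dist (x i) j' + 2 * dist (x (π i)) j') :=
        Finset.sum_le_sum fun i _ => key i
    _ = ∑ i, dist (x i) j' + 2 * ∑ i, dist (x (π i)) j' := by
        rw [Finset.sum_add_distrib, Finset.mul_sum]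
    _ = ∑ i, dist (x i) j' + 2 * ∑ i, dist (x i) j' := by
        rw [Equiv.sum_comp π (fun i => dist (x i) j')]
    _ = 3 * ∑ i, dist (x i) j' := by ring
end

section
/- There exists a constant c > 0 such that for every n ≥ 1 and every randomized ordinal one-sided matching rule f, which maps each profile of strict rankings of n agents over n items to a probability distribution over perfect matchings (bijections from agents to items), there exists an instance with unit-sum valuations and consistent rankings ≻ such that max_{μ} SW(μ) ≥ c·√n · E_{μ∼f(≻)}[SW(μ)], where the maximum is over all perfect matchings μ. In particular, every randomized ordinal rule for one-sided matching, including Random Serial Dictatorship, has distortion Ω(√n). -/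
/-- **Lower bound of `Ω(√n)` for randomized ordinal one-sided matching rules**
(Filos-Ratsikas, Frederiksen, Zhang). There is a constant `c > 0` such that for every
`n ≥ 1` and every randomized ordinal matching rule `f` — mapping each profile of strict
rankings of the `n` agents over the `n` items (`σ i g` is the 0-indexed position of
item `g` in agent `i`'s ranking) to a probability distribution over perfect matchings
(bijections `Fin n ≃ Fin n` from agents to items) — there is an instance with
nonnegative unit-sum valuations `v` and consistent rankings `σ` in which some perfect
matching `μ` has social welfare at least `c⬝√n` times the expected social welfare of
`f σ`, where `SW(μ) = ∑ i, v i (μ i)`. -/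
theorem randomized_matching_distortion_lower_bound :
    ∃ c : ℝ, 0 < c ∧
      ∀ (n : ℕ), 1 ≤ n →
      ∀ f : (Fin n → (Fin n ≃ Fin n)) → (Equiv.Perm (Fin n) → ℝ),
        (∀ σ μ, 0 ≤ f σ μ) →
        (∀ σ, ∑ μ : Equiv.Perm (Fin n), f σ μ = 1) →
        ∃ (v : Fin n → Fin n → ℝ) (σ : Fin n → (Fin n ≃ Fin n)),
          (∀ i g, 0 ≤ v i g) ∧ (∀ i, ∑ g, v i g = 1) ∧
          (∀ i g g', σ i g < σ i g' → v i g' ≤ v i g) ∧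
          ∃ μ : Equiv.Perm (Fin n),
            c * Real.sqrt n *
                (∑ μ' : Equiv.Perm (Fin n), f σ μ' * ∑ i, v i (μ' i)) ≤
              ∑ i, v i (μ i) := by
  classical
  refine ⟨1/4, by norm_num, ?_⟩
  intro n hn f hf0 hf1
  haveI : NeZero n := ⟨by omega⟩
  have hn0 : 0 < n := by omega
  set k := Nat.sqrt n with hkdef
  have hk1 : 1 ≤ k := Nat.sqrt_pos.mpr hn0
  have hkk : k * k ≤ n := Nat.sqrt_le n
  have hkn : k ≤ n := le_trans (Nat.le_mul_of_pos_left k hk1) hkk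
  have htlt : ∀ m : ℕ, m % k < n := fun m =>
    lt_of_lt_of_le (Nat.mod_lt m (by omega)) hkn
  -- rankings: agent i's top item is t i = i % k
  set t : Fin n → Fin n := fun i => ⟨i.val % k, htlt i.val⟩ with htdef
  set σ : Fin n → Fin n ≃ Fin n := fun i => Equiv.swap (t i) 0 with hσdef
  -- probability that agent i receives its group's item
  set P : Fin n → ℝ :=
    fun i => ∑ μ : Equiv.Perm (Fin n), if μ i = t i then f σ μ else 0 with hPdef
  have hsum1 : ∀ tj : Fin n,
      (∑ i : Fin n, ∑ μ : Equiv.Perm (Fin n), if μ i = tj then f σ μ else 0) = 1 := by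
    intro tj
    rw [Finset.sum_comm]
    have hterm : ∀ μ : Equiv.Perm (Fin n),
        (∑ i : Fin n, if μ i = tj then f σ μ else 0) = f σ μ := by
      intro μ
      have hiff : ∀ i : Fin n, (μ i = tj) ↔ (i = μ.symm tj) := fun i =>
        Equiv.apply_eq_iff_eq_symm_apply μ
      simp only [hiff]
      simp [Finset.sum_ite_eq']
    simp only [hterm]
    exact hf1 σ
  -- in each group of agents (same residue mod k) there is one with small probability
  have hchoice : ∀ j : Fin k, ∃ i : Fin n, i.val % k = j.val ∧ P i ≤ 1 / k := by
    intro j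
    set G : Finset (Fin n) := Finset.univ.filter (fun i => i.val % k = j.val) with hG
    have hjk : (j : ℕ) < n := lt_of_lt_of_le j.2 hkn
    have htG : ∀ i ∈ G, t i = ⟨j.val, hjk⟩ := by
      intro i hi
      rw [hG, Finset.mem_filter] at hi
      exact Fin.ext hi.2
    have hcard : k ≤ G.card := by
      have hlt' : ∀ m : Fin k, m.val * k + j.val < n := by
        intro m
        have h1 : m.val * k + j.val < k * k := by nlinarith [m.2, j.2]
        omega
      have hmem : ∀ m : Fin k, (⟨m.val * k + j.val, hlt' m⟩ : Fin n) ∈ G := by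
        intro m
        rw [hG, Finset.mem_filter]
        refine ⟨Finset.mem_univ _, ?_⟩
        show (m.val * k + j.val) % k = j.val
        rw [Nat.add_comm, Nat.add_mul_mod_self_right, Nat.mod_eq_of_lt j.2]
      calc k = (Finset.univ : Finset (Fin k)).card := by simp
        _ ≤ G.card := by
            apply Finset.card_le_card_of_injOn
              (fun m : Fin k => (⟨m.val * k + j.val, hlt' m⟩ : Fin n))
              (fun m _ => hmem m)
            intro a _ b _ hab
            have hv : a.val * k + j.val = b.val * k + j.val := congrArg Fin.val hab
            have hk0 : 0 < k := hk1
            have hvv : a.val = b.val := by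
              have := Nat.add_right_cancel hv
              exact Nat.eq_of_mul_eq_mul_right hk0 this
            exact Fin.ext hvv
    have hPsum : ∑ i ∈ G, P i ≤ 1 := by
      have h1 : ∑ i ∈ G, P i
          = ∑ i ∈ G, ∑ μ : Equiv.Perm (Fin n),
              (if μ i = (⟨j.val, hjk⟩ : Fin n) then f σ μ else 0) := by
        refine Finset.sum_congr rfl fun i hi => ?_
        rw [hPdef]
        simp only [htG i hi]
      rw [h1]
      calc ∑ i ∈ G, ∑ μ : Equiv.Perm (Fin n),
              (if μ i = (⟨j.val, hjk⟩ : Fin n) then f σ μ else 0)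
          ≤ ∑ i : Fin n, ∑ μ : Equiv.Perm (Fin n),
              (if μ i = (⟨j.val, hjk⟩ : Fin n) then f σ μ else 0) := by
            apply Finset.sum_le_sum_of_subset_of_nonneg (Finset.subset_univ _)
            intro i _ _
            apply Finset.sum_nonneg
            intro μ _
            split
            · exact hf0 σ μ
            · exact le_refl 0
        _ = 1 := hsum1 _
    by_contra hcon
    push_neg at hcon
    have hGne : G.Nonempty := Finset.card_pos.mp (by omega)
    have hlt : ∑ i ∈ G, (1/(k:ℝ)) < ∑ i ∈ G, P i := by
      apply Finset.sum_lt_sum_of_nonempty hGne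
      intro i hi
      rw [hG, Finset.mem_filter] at hi
      exact hcon i hi.2
    have hge : (1:ℝ) ≤ ∑ i ∈ G, (1/(k:ℝ)) := by
      rw [Finset.sum_const, nsmul_eq_mul]
      have hkpos : (0:ℝ) < k := by exact_mod_cast hk1
      have hcard' : (k:ℝ) ≤ G.card := by exact_mod_cast hcard
      calc (1:ℝ) = (k:ℝ) * (1/k) := by field_simp
        _ ≤ (G.card : ℝ) * (1/k) := by
            apply mul_le_mul_of_nonneg_right hcard'
            positivity
    linarith
  choose ch hch1 hch2 using hchoice
  have chinj : Function.Injective ch := by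
    intro a b hab
    have ha := hch1 a
    have hb := hch1 b
    rw [hab] at ha
    exact Fin.ext (by omega)
  -- the good matching: sends ch j to item j
  let er : Fin k ≃ {x : Fin n // x.val < k} :=
    ⟨fun j => ⟨⟨j.1, lt_of_lt_of_le j.2 hkn⟩, j.2⟩,
     fun x => ⟨x.1.1, x.2⟩,
     fun j => rfl, fun x => rfl⟩
  let e : {x : Fin n // x ∈ Set.range ch} ≃ {x : Fin n // x.val < k} :=
    (Equiv.ofInjective ch chinj).symm.trans er
  let μs : Equiv.Perm (Fin n) := e.extendSubtype
  have hμs : ∀ j : Fin k, μs (ch j) = t (ch j) := by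
    intro j
    have hx : ch j ∈ Set.range ch := ⟨j, rfl⟩
    have h1 := Equiv.extendSubtype_apply_of_mem e (ch j) hx
    have h2 : (Equiv.ofInjective ch chinj).symm ⟨ch j, hx⟩ = j :=
      Equiv.ofInjective_symm_apply chinj j
    have h3 : (e ⟨ch j, hx⟩ : Fin n) = ⟨j.1, lt_of_lt_of_le j.2 hkn⟩ := by
      simp only [e, Equiv.trans_apply, h2]
      rfl
    rw [h1, h3]
    refine Fin.ext ?_
    simp only [htdef]
    exact (hch1 j).symm
  -- valuations
  set v : Fin n → Fin n → ℝ :=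
    fun i g => if ∃ j : Fin k, ch j = i then (if g = t i then 1 else 0) else 1/n
    with hvdef
  have hv0 : ∀ i g, 0 ≤ v i g := by
    intro i g
    simp only [hvdef]
    split
    · split
      · norm_num
      · norm_num
    · positivity
  refine ⟨v, σ, hv0, ?_, ?_, μs, ?_⟩
  · -- unit sum
    intro i
    simp only [hvdef]
    split
    · simp [Finset.sum_ite_eq']
    · rw [Finset.sum_const, Finset.card_univ, Fintype.card_fin, nsmul_eq_mul]
      have hne : (n:ℝ) ≠ 0 := by exact_mod_cast hn0.ne'
      field_simp
  · -- consistency with rankings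
    intro i g g' hlt
    simp only [hvdef]
    split
    · by_cases hg' : g' = t i
      · exfalso
        have hz : σ i g' = 0 := by
          simp only [hσdef, hg']
          exact Equiv.swap_apply_left _ _
        rw [hz, Fin.lt_def] at hlt
        simp at hlt
      · rw [if_neg hg']
        split
        · norm_num
        · norm_num
    · exact le_refl _
  · -- the distortion inequality
    set Sf : Finset (Fin n) := Finset.image ch Finset.univ with hSf
    have hSfcard : Sf.card = k := by
      rw [hSf, Finset.card_image_of_injective _ chinj, Finset.card_univ, Fintype.card_fin]
    have hmemSf : ∀ i : Fin n, i ∈ Sf ↔ ∃ j : Fin k, ch j = i := by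
      intro i
      simp [hSf]
    -- expected welfare bound
    have hswap : (∑ μ' : Equiv.Perm (Fin n), f σ μ' * ∑ i, v i (μ' i))
        = ∑ i : Fin n, ∑ μ' : Equiv.Perm (Fin n), f σ μ' * v i (μ' i) := by
      simp_rw [Finset.mul_sum]
      exact Finset.sum_comm
    have hagent : ∀ i : Fin n, (∑ μ' : Equiv.Perm (Fin n), f σ μ' * v i (μ' i))
        ≤ if i ∈ Sf then 1/(k:ℝ) else 1/(n:ℝ) := by
      intro i
      by_cases hi : i ∈ Sf
      · rw [if_pos hi]
        obtain ⟨j, hj⟩ := (hmemSf i).mp hi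
        have hspec : ∃ j' : Fin k, ch j' = i := ⟨j, hj⟩
        have hveq : ∀ g, v i g = if g = t i then 1 else 0 := by
          intro g
          simp only [hvdef]
          rw [if_pos hspec]
        have hPi : (∑ μ' : Equiv.Perm (Fin n), f σ μ' * v i (μ' i)) = P i := by
          rw [hPdef]
          refine Finset.sum_congr rfl fun μ' _ => ?_
          rw [hveq]
          split
          · rw [mul_one]
          · rw [mul_zero]
        rw [hPi, ← hj]
        exact hch2 j
      · rw [if_neg hi]
        have hveq : ∀ g, v i g = 1/(n:ℝ) := by
          intro g
          simp only [hvdef]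
          rw [if_neg (by rwa [← hmemSf i])]
        simp_rw [hveq]
        rw [← Finset.sum_mul, hf1 σ, one_mul]
    have hE2 : (∑ μ' : Equiv.Perm (Fin n), f σ μ' * ∑ i, v i (μ' i)) ≤ 2 := by
      rw [hswap]
      calc ∑ i : Fin n, ∑ μ' : Equiv.Perm (Fin n), f σ μ' * v i (μ' i)
          ≤ ∑ i : Fin n, (if i ∈ Sf then 1/(k:ℝ) else 1/(n:ℝ)) :=
            Finset.sum_le_sum fun i _ => hagent i
        _ ≤ 2 := by
            rw [Finset.sum_ite]
            have hfe : Finset.univ.filter (fun i : Fin n => i ∈ Sf) = Sf := by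
              ext i; simp
            rw [hfe, Finset.sum_const, hSfcard, nsmul_eq_mul]
            have hkne : (k:ℝ) ≠ 0 := by
              have : (0:ℝ) < k := by exact_mod_cast hk1
              linarith
            have h4 : (k:ℝ) * (1/k) = 1 := by field_simp
            have h2 : ∑ _i ∈ Finset.univ.filter (fun i : Fin n => i ∉ Sf), (1/(n:ℝ)) ≤ 1 := by
              rw [Finset.sum_const, nsmul_eq_mul]
              have hc : (Finset.univ.filter (fun i : Fin n => i ∉ Sf)).card ≤ n := by
                calc (Finset.univ.filter (fun i : Fin n => i ∉ Sf)).card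
                    ≤ (Finset.univ : Finset (Fin n)).card := Finset.card_filter_le _ _
                  _ = n := by simp
              have hc' : ((Finset.univ.filter (fun i : Fin n => i ∉ Sf)).card : ℝ) ≤ n := by
                exact_mod_cast hc
              have hnne : (n:ℝ) ≠ 0 := by exact_mod_cast hn0.ne'
              calc ((Finset.univ.filter (fun i : Fin n => i ∉ Sf)).card : ℝ) * (1/n)
                  ≤ (n:ℝ) * (1/n) := by
                    apply mul_le_mul_of_nonneg_right hc'
                    positivity
                _ = 1 := by field_simp
            linarith
    have hE0 : 0 ≤ ∑ μ' : Equiv.Perm (Fin n), f σ μ' * ∑ i, v i (μ' i) :=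
      Finset.sum_nonneg fun μ' _ =>
        mul_nonneg (hf0 σ μ') (Finset.sum_nonneg fun i _ => hv0 i (μ' i))
    have hOPT : (k:ℝ) ≤ ∑ i, v i (μs i) := by
      have hone : ∀ i ∈ Sf, v i (μs i) = 1 := by
        intro i hi
        obtain ⟨j, hj⟩ := (hmemSf i).mp hi
        subst hj
        simp only [hvdef]
        rw [if_pos ⟨j, rfl⟩, if_pos (hμs j)]
      calc (k:ℝ) = ∑ i ∈ Sf, v i (μs i) := by
              rw [Finset.sum_congr rfl hone, Finset.sum_const, hSfcard, nsmul_eq_mul, mul_one]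
        _ ≤ ∑ i : Fin n, v i (μs i) :=
          Finset.sum_le_sum_of_subset_of_nonneg (Finset.subset_univ _)
            (fun i _ _ => hv0 i (μs i))
    have hsq : Real.sqrt n ≤ 2 * k := by
      have h2 : n < (k+1)*(k+1) := Nat.lt_succ_sqrt n
      have h2' : (n:ℝ) < ((k:ℝ)+1)*((k:ℝ)+1) := by exact_mod_cast h2
      have hk' : (1:ℝ) ≤ k := by exact_mod_cast hk1
      have h1 : (n:ℝ) ≤ (2*(k:ℝ))^2 := by nlinarith
      calc Real.sqrt n ≤ Real.sqrt ((2*(k:ℝ))^2) := Real.sqrt_le_sqrt h1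
        _ = 2*k := by rw [Real.sqrt_sq (by positivity)]
    have hmm := mul_le_mul hsq hE2 hE0 (by positivity)
    nlinarith [hOPT, hmm]
end

section
/- There exists a constant c > 0 such that for every n ≥ 1, the expected social welfare of Random Serial Dictatorship on any one-sided matching instance with unit-sum valuations and consistent rankings satisfies E[SW(RSD(≻))] ≥ (1/(c·√n)) · max_{μ} SW(μ), where the maximum is over all perfect matchings μ. That is, Random Serial Dictatorship has distortion O(√n). -/
/-- The most-preferred item of agent `i` among a finset `S` of items, according to the
position function `σ i` (lower position = more preferred); junk value if `S = ∅`. -/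
noncomputable def bestItem (n : ℕ) (σ : Fin n → (Fin n ≃ Fin n)) (i : Fin n)
    (S : Finset (Fin n)) : Fin n :=
  if h : (S.image (σ i)).Nonempty then (σ i).symm ((S.image (σ i)).min' h) else i

/-- The set of items taken after the first `j` agents, in the order `π` (agent `π 0`
first, then `π 1`, ...), have each picked their most-preferred remaining item. -/
noncomputable def takenItems (n : ℕ) (σ : Fin n → (Fin n ≃ Fin n))
    (π : Equiv.Perm (Fin n)) : ℕ → Finset (Fin n)
  | 0 => ∅
  | j + 1 =>
    if h : j < n then
      insert (bestItem n σ (π ⟨j, h⟩) (Finset.univ \ takenItems n σ π j))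
        (takenItems n σ π j)
    else takenItems n σ π j

/-- The serial dictatorship matching for the ordering `π` of the agents: agent `i`,
who moves at position `π.symm i`, receives her most-preferred item among those not
taken by the agents moving before her. -/
noncomputable def serialDictatorship (n : ℕ) (σ : Fin n → (Fin n ≃ Fin n))
    (π : Equiv.Perm (Fin n)) (i : Fin n) : Fin n :=
  bestItem n σ i (Finset.univ \ takenItems n σ π ((π.symm i).val))

open Finset Equiv

variable {n : ℕ}

lemma bestItem_mem (σ : Fin n → (Fin n ≃ Fin n)) (i : Fin n) {S : Finset (Fin n)}
    (hS : S.Nonempty) : bestItem n σ i S ∈ S := by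
  have h : (S.image (σ i)).Nonempty := hS.image _
  rw [bestItem, dif_pos h]
  obtain ⟨g, hg, hgeq⟩ := Finset.mem_image.mp ((S.image (σ i)).min'_mem h)
  rw [← hgeq, Equiv.symm_apply_apply]; exact hg

lemma bestItem_le (σ : Fin n → (Fin n ≃ Fin n)) (i : Fin n) {S : Finset (Fin n)}
    {g : Fin n} (hg : g ∈ S) : σ i (bestItem n σ i S) ≤ σ i g := by
  have h : (S.image (σ i)).Nonempty := Finset.Nonempty.image ⟨g, hg⟩ _
  rw [bestItem, dif_pos h, Equiv.apply_symm_apply]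
  exact Finset.min'_le _ _ (Finset.mem_image_of_mem _ hg)

lemma takenItems_card (σ : Fin n → (Fin n ≃ Fin n)) (π : Equiv.Perm (Fin n)) :
    ∀ j, j ≤ n → (takenItems n σ π j).card = j := by
  intro j
  induction j with
  | zero => intro _; simp [takenItems]
  | succ j ih =>
    intro hj
    have hjn : j < n := hj
    have ihc := ih (le_of_lt hjn)
    have hne : (univ \ takenItems n σ π j).Nonempty := by
      rw [← Finset.card_pos, Finset.card_sdiff_of_subset (Finset.subset_univ _), Finset.card_univ,
        Fintype.card_fin, ihc]
      omega
    have hmem := bestItem_mem σ (π ⟨j, hjn⟩) hne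
    rw [takenItems, dif_pos hjn, Finset.card_insert_of_notMem (Finset.mem_sdiff.mp hmem).2, ihc]

lemma takenItems_congr (σ : Fin n → (Fin n ≃ Fin n)) {π π' : Equiv.Perm (Fin n)} :
    ∀ j, (∀ x : Fin n, x.val < j → π x = π' x) →
      takenItems n σ π j = takenItems n σ π' j := by
  intro j
  induction j with
  | zero => intro _; rfl
  | succ j ih =>
    intro h
    have ihe := ih (fun x hx => h x (Nat.lt_succ_of_lt hx))
    by_cases hjn : j < n
    · rw [takenItems, dif_pos hjn, takenItems, dif_pos hjn, ihe, h ⟨j, hjn⟩ (Nat.lt_succ_self j)]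
    · rw [takenItems, dif_neg hjn, takenItems, dif_neg hjn, ihe]

lemma takenItems_mem (σ : Fin n → (Fin n ≃ Fin n)) (π : Equiv.Perm (Fin n)) :
    ∀ j, ∀ g ∈ takenItems n σ π j,
      ∃ k, ∃ hk : k < n, k < j ∧
        g = bestItem n σ (π ⟨k, hk⟩) (Finset.univ \ takenItems n σ π k) := by
  intro j
  induction j with
  | zero => intro g hg; simp [takenItems] at hg
  | succ j ih =>
    intro g hg
    by_cases hjn : j < n
    · rw [takenItems, dif_pos hjn, Finset.mem_insert] at hg
      rcases hg with h | h
      · exact ⟨j, hjn, Nat.lt_succ_self j, h⟩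
      · obtain ⟨k, hk, hkj, he⟩ := ih g h
        exact ⟨k, hk, Nat.lt_succ_of_lt hkj, he⟩
    · rw [takenItems, dif_neg hjn] at hg
      obtain ⟨k, hk, hkj, he⟩ := ih g hg
      exact ⟨k, hk, Nat.lt_succ_of_lt hkj, he⟩

lemma sum_perm_apply (j : Fin n) (f : Fin n → ℝ) :
    ∑ π : Equiv.Perm (Fin n), f (π j) = (Nat.factorial (n - 1) : ℝ) * ∑ i, f i := by
  have hn : 0 < n := j.pos
  have key : ∀ j' : Fin n, ∑ π : Equiv.Perm (Fin n), f (π j')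
      = ∑ π : Equiv.Perm (Fin n), f (π j) := by
    intro j'
    exact Fintype.sum_bijective (fun π => π * Equiv.swap j j')
      (Group.mulRight_bijective _) _ _ (fun π => by simp)
  have h2 : (n : ℝ) * ∑ π : Equiv.Perm (Fin n), f (π j)
      = (Nat.factorial n : ℝ) * ∑ i, f i := by
    calc (n : ℝ) * ∑ π : Equiv.Perm (Fin n), f (π j)
        = ∑ j' : Fin n, ∑ π : Equiv.Perm (Fin n), f (π j') := by
          rw [Finset.sum_congr rfl (fun j' _ => key j'), Finset.sum_const, Finset.card_univ,
            Fintype.card_fin, nsmul_eq_mul]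
      _ = ∑ π : Equiv.Perm (Fin n), ∑ j' : Fin n, f (π j') := Finset.sum_comm
      _ = ∑ π : Equiv.Perm (Fin n), ∑ i, f i :=
          Finset.sum_congr rfl (fun π _ => Equiv.sum_comp π f)
      _ = (Nat.factorial n : ℝ) * ∑ i, f i := by
          rw [Finset.sum_const, Finset.card_univ, Fintype.card_perm, Fintype.card_fin,
            nsmul_eq_mul]
  have hfac : (Nat.factorial n : ℝ) = (n : ℝ) * (Nat.factorial (n - 1) : ℝ) := by
    rcases Nat.exists_eq_succ_of_ne_zero hn.ne' with ⟨m, rfl⟩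
    push_cast [Nat.factorial_succ]
    ring
  have hne : (n : ℝ) ≠ 0 := Nat.cast_ne_zero.mpr hn.ne'
  apply mul_left_cancel₀ hne
  rw [h2, hfac]
  ring

/-- `chosenAt π k` only depends on `π` at positions `≤ k`. -/
lemma chosen_congr (σ : Fin n → (Fin n ≃ Fin n)) {π π' : Equiv.Perm (Fin n)}
    {k : ℕ} (hk : k < n) (h : ∀ x : Fin n, x.val ≤ k → π x = π' x) :
    bestItem n σ (π ⟨k, hk⟩) (Finset.univ \ takenItems n σ π k)
      = bestItem n σ (π' ⟨k, hk⟩) (Finset.univ \ takenItems n σ π' k) := by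
  rw [takenItems_congr σ k (fun x hx => h x (le_of_lt hx)), h ⟨k, hk⟩ (le_refl k)]

lemma card_blocked_le (σ : Fin n → (Fin n ≃ Fin n)) (μ : Equiv.Perm (Fin n))
    {k j : ℕ} (hk : k < n) (hj : j < n) (hkj : k < j) :
    ((n - 1 - k : ℕ) : ℝ) *
      ((Finset.univ : Finset (Equiv.Perm (Fin n))).filter (fun π =>
        bestItem n σ (π ⟨k, hk⟩) (Finset.univ \ takenItems n σ π k) = μ (π ⟨j, hj⟩))).card
      ≤ (Nat.factorial n : ℝ) := by
  classical
  set kF : Fin n := ⟨k, hk⟩ with hkF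
  set jF : Fin n := ⟨j, hj⟩ with hjF
  set S := (Finset.univ : Finset (Equiv.Perm (Fin n))).filter (fun π =>
    bestItem n σ (π kF) (Finset.univ \ takenItems n σ π k) = μ (π jF)) with hS
  -- the injection
  have hprefix : ∀ (π : Equiv.Perm (Fin n)) (m : Fin n), kF < m →
      ∀ x : Fin n, x.val ≤ k → (π * Equiv.swap jF m) x = π x := by
    intro π m hm x hx
    have h1 : x ≠ jF := by
      intro he; rw [he] at hx; exact absurd hx (by simp [hjF]; omega)
    have h2 : x ≠ m := by
      intro he; rw [he] at hx
      have : k < m.val := hm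
      omega
    simp [Equiv.Perm.mul_apply, Equiv.swap_apply_of_ne_of_ne h1 h2]
  have hchosen : ∀ (π : Equiv.Perm (Fin n)) (m : Fin n), kF < m →
      bestItem n σ ((π * Equiv.swap jF m) kF)
          (Finset.univ \ takenItems n σ (π * Equiv.swap jF m) k)
        = bestItem n σ (π kF) (Finset.univ \ takenItems n σ π k) :=
    fun π m hm => chosen_congr σ hk (hprefix π m hm)
  have hinj : Set.InjOn (fun p : Equiv.Perm (Fin n) × Fin n => p.1 * Equiv.swap jF p.2)
      ↑(S ×ˢ Finset.Ioi kF) := by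
    rintro ⟨π₁, m₁⟩ h₁ ⟨π₂, m₂⟩ h₂ he
    simp only [Finset.coe_product, Set.mem_prod, Finset.mem_coe, Finset.mem_Ioi,
      hS, Finset.mem_filter, Finset.mem_univ, true_and] at h₁ h₂
    obtain ⟨hP₁, hm₁⟩ := h₁
    obtain ⟨hP₂, hm₂⟩ := h₂
    simp only at he
    have hc₁ := hchosen π₁ m₁ hm₁
    have hc₂ := hchosen π₂ m₂ hm₂
    have hμ : μ ((π₁ * Equiv.swap jF m₁) m₁) = μ ((π₁ * Equiv.swap jF m₁) m₂) := by
      have e1 : (π₁ * Equiv.swap jF m₁) m₁ = π₁ jF := by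
        simp [Equiv.Perm.mul_apply]
      have e2 : (π₁ * Equiv.swap jF m₁) m₂ = π₂ jF := by
        rw [he]; simp [Equiv.Perm.mul_apply]
      rw [e1, e2, ← hP₁, ← hP₂, ← hc₁, ← hc₂, he]
    have hm : m₁ = m₂ := (π₁ * Equiv.swap jF m₁).injective (μ.injective hμ)
    have hπ : π₁ = π₂ := by
      have h2 := he; rw [hm] at h2; exact mul_right_cancel h2
    rw [hπ, hm]
  have hcard := Finset.card_le_card_of_injOn _
    (fun p _ => Finset.mem_univ (p.1 * Equiv.swap jF p.2)) hinj
  rw [Finset.card_product, Finset.card_univ, Fintype.card_perm, Fintype.card_fin] at hcard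
  rw [Fin.card_Ioi] at hcard
  calc ((n - 1 - k : ℕ) : ℝ) * S.card = ((S.card * (n - 1 - kF.val) : ℕ) : ℝ) := by
        push_cast [hkF]; ring
    _ ≤ (Nat.factorial n : ℝ) := Nat.cast_le.mpr hcard

lemma fac_eq {n : ℕ} (hn : 0 < n) :
    (Nat.factorial n : ℝ) = (n : ℝ) * (Nat.factorial (n - 1) : ℝ) := by
  rcases Nat.exists_eq_succ_of_ne_zero hn.ne' with ⟨m, rfl⟩
  push_cast [Nat.factorial_succ]
  ring


set_option maxHeartbeats 1000000 in
/-- **Random Serial Dictatorship has distortion `O(√n)` for one-sided matching**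
(Filos-Ratsikas, Frederiksen, Zhang). There is a constant `c > 0` such that for every
one-sided matching instance with `n ≥ 1` agents and `n` items, nonnegative unit-sum
valuations `v`, and consistent rankings `σ` (`σ i g` is the 0-indexed position of item
`g` in agent `i`'s ranking), the expected social welfare of Random Serial Dictatorship
— the average, over the `n!` uniformly random orderings `π` of the agents, of the
social welfare of the serial dictatorship matching — is at least `1/(c⬝√n)` times the
social welfare of every perfect matching `μ`, where `SW(μ) = ∑ i, v i (μ i)`. -/
theorem rsd_distortion_upper_bound :
    ∃ c : ℝ, 0 < c ∧
      ∀ (n : ℕ), 1 ≤ n →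
      ∀ (v : Fin n → Fin n → ℝ) (σ : Fin n → (Fin n ≃ Fin n)),
        (∀ i g, 0 ≤ v i g) →
        (∀ i, ∑ g, v i g = 1) →
        (∀ i g g', σ i g < σ i g' → v i g' ≤ v i g) →
        ∀ μ : Equiv.Perm (Fin n),
          (1 / (c * Real.sqrt n)) * ∑ i, v i (μ i) ≤
            (∑ π : Equiv.Perm (Fin n), ∑ i, v i (serialDictatorship n σ π i)) /
              (Nat.factorial n : ℝ) := by
  classical
  refine ⟨8, by norm_num, ?_⟩
  intro n hn v σ h0 h1 hcons μ
  have hn0 : 0 < n := hn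
  have hn0R : (0:ℝ) < n := by exact_mod_cast hn0
  set R := ∑ i, v i (μ i) with hR
  have hv1 : ∀ i g, v i g ≤ 1 := by
    intro i g
    rw [← h1 i]
    exact Finset.single_le_sum (fun g' _ => h0 i g') (Finset.mem_univ g)
  have hcons' : ∀ i g g', σ i g ≤ σ i g' → v i g' ≤ v i g := by
    intro i g g' h
    rcases lt_or_eq_of_le h with h | h
    · exact hcons i g g' h
    · rw [(σ i).injective h]
  have hbest : ∀ (i : Fin n) (S : Finset (Fin n)) (g : Fin n), g ∈ S →
      v i g ≤ v i (bestItem n σ i S) := fun i S g hg => hcons' i _ g (bestItem_le σ i hg)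
  have hR0 : 0 ≤ R := Finset.sum_nonneg fun i _ => h0 i (μ i)
  have hRn : R ≤ (n:ℝ) := by
    rw [hR]
    calc ∑ i, v i (μ i) ≤ ∑ _i : Fin n, (1:ℝ) :=
          Finset.sum_le_sum fun i _ => hv1 i (μ i)
      _ = n := by simp
  have hfacpos : (0:ℝ) < (Nat.factorial n : ℝ) := by
    exact_mod_cast Nat.factorial_pos n
  have hfacpos' : (0:ℝ) < (Nat.factorial (n-1) : ℝ) := by
    exact_mod_cast Nat.factorial_pos (n-1)
  have hsq : Real.sqrt n * Real.sqrt n = n := Real.mul_self_sqrt (Nat.cast_nonneg n)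
  have hsqrt1 : 1 ≤ Real.sqrt n := by
    rw [show (1:ℝ) = Real.sqrt 1 from Real.sqrt_one.symm]
    exact Real.sqrt_le_sqrt (by exact_mod_cast hn)
  -- Lower bound 1: the expected welfare is at least 1.
  have hE1 : (Nat.factorial n : ℝ) ≤
      ∑ π : Equiv.Perm (Fin n), ∑ i, v i (serialDictatorship n σ π i) := by
    have hper : ∀ (π : Equiv.Perm (Fin n)) (i : Fin n),
        v i ((σ i).symm (π.symm i)) ≤ v i (serialDictatorship n σ π i) := by
      intro π i
      set p : Fin n := π.symm i with hp
      have hcard : (takenItems n σ π p.val).card = p.val := takenItems_card σ π p.val p.isLt.le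
      have hnsub : ¬ ((Finset.Iic p).image (σ i).symm ⊆ takenItems n σ π p.val) := by
        intro hsub
        have hc := Finset.card_le_card hsub
        rw [Finset.card_image_of_injective _ (σ i).symm.injective, Fin.card_Iic, hcard] at hc
        omega
      obtain ⟨g, hg1, hg2⟩ := Finset.not_subset.mp hnsub
      obtain ⟨q, hq, hgq⟩ := Finset.mem_image.mp hg1
      have hgmem : g ∈ Finset.univ \ takenItems n σ π p.val :=
        Finset.mem_sdiff.mpr ⟨Finset.mem_univ g, hg2⟩
      have hSD : serialDictatorship n σ π i
          = bestItem n σ i (Finset.univ \ takenItems n σ π p.val) := rfl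
      have h1' : σ i (serialDictatorship n σ π i) ≤ σ i ((σ i).symm p) := by
        rw [hSD, Equiv.apply_symm_apply]
        calc σ i (bestItem n σ i (Finset.univ \ takenItems n σ π p.val)) ≤ σ i g :=
              bestItem_le σ i hgmem
          _ ≤ p := by rw [← hgq, Equiv.apply_symm_apply]; exact Finset.mem_Iic.mp hq
      exact hcons' i _ _ h1'
    have hsum : ∑ π : Equiv.Perm (Fin n), ∑ i : Fin n, v i ((σ i).symm (π.symm i))
        = (Nat.factorial n : ℝ) := by
      rw [Finset.sum_comm]
      have hin : ∀ i : Fin n, ∑ π : Equiv.Perm (Fin n), v i ((σ i).symm (π.symm i))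
          = (Nat.factorial (n-1) : ℝ) := by
        intro i
        have hb : ∑ π : Equiv.Perm (Fin n), v i ((σ i).symm (π.symm i))
            = ∑ π : Equiv.Perm (Fin n), v i ((σ i).symm (π i)) :=
          Fintype.sum_bijective (fun π : Equiv.Perm (Fin n) => π⁻¹)
            inv_involutive.bijective _ _ (fun π => rfl)
        rw [hb, sum_perm_apply i (fun x => v i ((σ i).symm x)), Equiv.sum_comp (σ i).symm (v i),
          h1 i, mul_one]
      rw [Finset.sum_congr rfl (fun i _ => hin i), Finset.sum_const, Finset.card_univ,
        Fintype.card_fin, nsmul_eq_mul, ← fac_eq hn0]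
    calc (Nat.factorial n : ℝ) = ∑ π : Equiv.Perm (Fin n), ∑ i, v i ((σ i).symm (π.symm i)) :=
          hsum.symm
      _ ≤ ∑ π : Equiv.Perm (Fin n), ∑ i, v i (serialDictatorship n σ π i) :=
          Finset.sum_le_sum fun π _ => Finset.sum_le_sum fun i _ => hper π i
  by_cases hcase : R ≤ 8 * Real.sqrt n
  · have h8 : (0:ℝ) < 8 * Real.sqrt n := by positivity
    have hL : 1/(8*Real.sqrt n) * R ≤ 1 := by
      rw [div_mul_eq_mul_div, one_mul, div_le_one h8]; exact hcase
    have hRhs : (1:ℝ) ≤ (∑ π : Equiv.Perm (Fin n), ∑ i, v i (serialDictatorship n σ π i))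
        / (Nat.factorial n : ℝ) := by
      rw [le_div_iff₀ hfacpos, one_mul]; exact hE1
    linarith
  · push_neg at hcase
    have h8 : (0:ℝ) < 8 * Real.sqrt n := by positivity
    set T := Nat.ceil (R/2) with hTdef
    have hT1 : R/2 ≤ (T:ℝ) := Nat.le_ceil _
    have hT2 : (T:ℝ) ≤ R/2 + 1 := (Nat.ceil_lt_add_one (by positivity)).le
    have hR8 : (8:ℝ) < R := by nlinarith
    have hTn : T ≤ n := by
      have h : (T:ℝ) ≤ (n:ℝ) := by nlinarith
      exact_mod_cast h
    have hT4 : 4 ≤ T := by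
      have h : (4:ℝ) ≤ (T:ℝ) := by linarith
      exact_mod_cast h
    -- per-position lower bound
    have hkey : ∀ (j : ℕ) (hjn : j < n), j < T →
        (Nat.factorial (n-1) : ℝ) * R - 2 * j * (Nat.factorial (n-1) : ℝ)
          ≤ ∑ π : Equiv.Perm (Fin n),
              v (π ⟨j, hjn⟩) (serialDictatorship n σ π (π ⟨j, hjn⟩)) := by
      intro j hjn hjT
      set jF : Fin n := ⟨j, hjn⟩ with hjF
      have hpt : ∀ π : Equiv.Perm (Fin n),
          v (π jF) (μ (π jF)) - (if μ (π jF) ∈ takenItems n σ π j then (1:ℝ) else 0)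
            ≤ v (π jF) (serialDictatorship n σ π (π jF)) := by
        intro π
        by_cases hb : μ (π jF) ∈ takenItems n σ π j
        · rw [if_pos hb]
          have h1' := hv1 (π jF) (μ (π jF))
          have h2' := h0 (π jF) (serialDictatorship n σ π (π jF))
          linarith
        · rw [if_neg hb, sub_zero]
          have hSD : serialDictatorship n σ π (π jF)
              = bestItem n σ (π jF) (Finset.univ \ takenItems n σ π j) := by
            rw [serialDictatorship, Equiv.symm_apply_apply]
          rw [hSD]
          exact hbest _ _ _ (Finset.mem_sdiff.mpr ⟨Finset.mem_univ _, hb⟩)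
      have hblock : ∀ π : Equiv.Perm (Fin n),
          (if μ (π jF) ∈ takenItems n σ π j then (1:ℝ) else 0)
            ≤ ∑ k ∈ Finset.range j, (if h : k < n then
                (if bestItem n σ (π ⟨k, h⟩) (Finset.univ \ takenItems n σ π k) = μ (π jF)
                  then (1:ℝ) else 0) else 0) := by
        intro π
        have hGnn : ∀ k, (0:ℝ) ≤ (if h : k < n then
            (if bestItem n σ (π ⟨k, h⟩) (Finset.univ \ takenItems n σ π k) = μ (π jF)
              then (1:ℝ) else 0) else 0) := by
          intro k; split
          · split <;> norm_num
          · norm_num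
        by_cases hb : μ (π jF) ∈ takenItems n σ π j
        · rw [if_pos hb]
          obtain ⟨k, hk, hkj, he⟩ := takenItems_mem σ π j _ hb
          have hGk : (1:ℝ) = (if h : k < n then
              (if bestItem n σ (π ⟨k, h⟩) (Finset.univ \ takenItems n σ π k) = μ (π jF)
                then (1:ℝ) else 0) else 0) := by
            rw [dif_pos hk, if_pos he.symm]
          refine le_trans (le_of_eq hGk) ?_
          exact Finset.single_le_sum (fun k _ => hGnn k) (Finset.mem_range.mpr hkj)
        · rw [if_neg hb]
          exact Finset.sum_nonneg fun k _ => hGnn k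
      -- sum the blocked indicators over π
      have hblocksum : ∑ π : Equiv.Perm (Fin n),
          (if μ (π jF) ∈ takenItems n σ π j then (1:ℝ) else 0)
            ≤ 2 * j * (Nat.factorial (n-1) : ℝ) := by
        calc ∑ π : Equiv.Perm (Fin n), (if μ (π jF) ∈ takenItems n σ π j then (1:ℝ) else 0)
            ≤ ∑ π : Equiv.Perm (Fin n), ∑ k ∈ Finset.range j, (if h : k < n then
                (if bestItem n σ (π ⟨k, h⟩) (Finset.univ \ takenItems n σ π k) = μ (π jF)
                  then (1:ℝ) else 0) else 0) := Finset.sum_le_sum fun π _ => hblock π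
          _ = ∑ k ∈ Finset.range j, ∑ π : Equiv.Perm (Fin n), (if h : k < n then
                (if bestItem n σ (π ⟨k, h⟩) (Finset.univ \ takenItems n σ π k) = μ (π jF)
                  then (1:ℝ) else 0) else 0) := Finset.sum_comm
          _ ≤ ∑ _k ∈ Finset.range j, 2 * (Nat.factorial (n-1) : ℝ) := by
              apply Finset.sum_le_sum
              intro k hkr
              have hkj : k < j := Finset.mem_range.mp hkr
              have hkn : k < n := lt_trans hkj hjn
              have hsimp : ∀ π : Equiv.Perm (Fin n), (if h : k < n then
                  (if bestItem n σ (π ⟨k, h⟩) (Finset.univ \ takenItems n σ π k) = μ (π jF)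
                    then (1:ℝ) else 0) else 0)
                  = (if bestItem n σ (π ⟨k, hkn⟩) (Finset.univ \ takenItems n σ π k) = μ (π jF)
                    then (1:ℝ) else 0) := fun π => dif_pos hkn
              rw [Finset.sum_congr rfl (fun π _ => hsimp π), Finset.sum_boole]
              have hcb := card_blocked_le σ μ hkn hjn hkj
              have hcast : ((n - 1 - k : ℕ) : ℝ) = (n:ℝ) - 1 - (k:ℝ) := by
                rw [Nat.sub_sub, Nat.cast_sub (by omega : 1 + k ≤ n)]
                push_cast; ring
              have hk2 : (k:ℝ) + 2 ≤ (T:ℝ) := by exact_mod_cast (by omega : k + 2 ≤ T)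
              have hhalf : (n:ℝ)/2 ≤ ((n - 1 - k : ℕ) : ℝ) := by
                rw [hcast]; linarith
              set C : ℝ := (((Finset.univ : Finset (Equiv.Perm (Fin n))).filter (fun π =>
                bestItem n σ (π ⟨k, hkn⟩) (Finset.univ \ takenItems n σ π k)
                  = μ (π jF))).card : ℝ) with hC
              have hC0 : (0:ℝ) ≤ C := Nat.cast_nonneg _
              have hCn : (n:ℝ)/2 * C ≤ (Nat.factorial n : ℝ) :=
                le_trans (mul_le_mul_of_nonneg_right hhalf hC0) hcb
              rw [fac_eq hn0] at hCn
              nlinarith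
          _ = 2 * j * (Nat.factorial (n-1) : ℝ) := by
              rw [Finset.sum_const, Finset.card_range, nsmul_eq_mul]; ring
      have hmain : ∑ π : Equiv.Perm (Fin n), v (π jF) (μ (π jF)) = (Nat.factorial (n-1) : ℝ) * R :=
        sum_perm_apply jF (fun i => v i (μ i))
      calc (Nat.factorial (n-1) : ℝ) * R - 2 * j * (Nat.factorial (n-1) : ℝ)
          ≤ ∑ π : Equiv.Perm (Fin n), v (π jF) (μ (π jF))
            - ∑ π : Equiv.Perm (Fin n), (if μ (π jF) ∈ takenItems n σ π j then (1:ℝ) else 0) := by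
            rw [hmain]; linarith
        _ = ∑ π : Equiv.Perm (Fin n), (v (π jF) (μ (π jF))
            - (if μ (π jF) ∈ takenItems n σ π j then (1:ℝ) else 0)) :=
            (Finset.sum_sub_distrib _ _).symm
        _ ≤ ∑ π : Equiv.Perm (Fin n), v (π jF) (serialDictatorship n σ π (π jF)) :=
            Finset.sum_le_sum fun π _ => hpt π
    -- total lower bound
    have htot : (Nat.factorial (n-1) : ℝ) * (T * R - T * ((T:ℝ) - 1))
        ≤ ∑ π : Equiv.Perm (Fin n), ∑ i, v i (serialDictatorship n σ π i) := by
      have hposns : ∀ π : Equiv.Perm (Fin n),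
          ∑ j ∈ Finset.range T, (if h : j < n
              then v (π ⟨j, h⟩) (serialDictatorship n σ π (π ⟨j, h⟩)) else 0)
            ≤ ∑ i, v i (serialDictatorship n σ π i) := by
        intro π
        have e1 : ∑ i, v i (serialDictatorship n σ π i)
            = ∑ x : Fin n, v (π x) (serialDictatorship n σ π (π x)) :=
          (Equiv.sum_comp π fun i => v i (serialDictatorship n σ π i)).symm
        have e2 : ∑ x : Fin n, v (π x) (serialDictatorship n σ π (π x))
            = ∑ j ∈ Finset.range n, (if h : j < n
              then v (π ⟨j, h⟩) (serialDictatorship n σ π (π ⟨j, h⟩)) else 0) := by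
          rw [← Fin.sum_univ_eq_sum_range (fun j => (if h : j < n
              then v (π ⟨j, h⟩) (serialDictatorship n σ π (π ⟨j, h⟩)) else 0))]
          apply Finset.sum_congr rfl
          intro x _
          rw [dif_pos x.isLt]
        rw [e1, e2]
        apply Finset.sum_le_sum_of_subset_of_nonneg (Finset.range_subset_range.mpr hTn)
        intro j _ _
        split
        · exact h0 _ _
        · exact le_refl 0
      have hgauss : (∑ j ∈ Finset.range T, (j:ℝ)) = (T:ℝ) * ((T:ℝ) - 1) / 2 := by
        have hnat := Finset.sum_range_id_mul_two T
        have : ((∑ j ∈ Finset.range T, j) * 2 : ℕ) = (T * (T-1) : ℕ) := hnat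
        have hcast : ((∑ j ∈ Finset.range T, j : ℕ) : ℝ) * 2 = (T:ℝ) * ((T:ℝ) - 1) := by
          rw [show ((T:ℝ) - 1) = ((T - 1 : ℕ) : ℝ) by
            rw [Nat.cast_sub (by omega : 1 ≤ T)]; push_cast; ring]
          exact_mod_cast this
        push_cast at hcast ⊢
        linarith
      calc (Nat.factorial (n-1) : ℝ) * (T * R - T * ((T:ℝ) - 1))
          = ∑ j ∈ Finset.range T, ((Nat.factorial (n-1) : ℝ) * R
              - 2 * (j:ℝ) * (Nat.factorial (n-1) : ℝ)) := by
            rw [Finset.sum_sub_distrib, Finset.sum_const, Finset.card_range, nsmul_eq_mul]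
            rw [show ∑ j ∈ Finset.range T, 2 * (j:ℝ) * (Nat.factorial (n-1) : ℝ)
                = 2 * (Nat.factorial (n-1) : ℝ) * ∑ j ∈ Finset.range T, (j:ℝ) by
              rw [Finset.mul_sum]; apply Finset.sum_congr rfl; intro j _; ring]
            rw [hgauss]; ring
        _ ≤ ∑ j ∈ Finset.range T, ∑ π : Equiv.Perm (Fin n), (if h : j < n
              then v (π ⟨j, h⟩) (serialDictatorship n σ π (π ⟨j, h⟩)) else 0) := by
            apply Finset.sum_le_sum
            intro j hjr
            have hjT : j < T := Finset.mem_range.mp hjr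
            have hjn : j < n := lt_of_lt_of_le hjT hTn
            have := hkey j hjn hjT
            calc (Nat.factorial (n-1) : ℝ) * R - 2 * (j:ℝ) * (Nat.factorial (n-1) : ℝ)
                ≤ ∑ π : Equiv.Perm (Fin n),
                    v (π ⟨j, hjn⟩) (serialDictatorship n σ π (π ⟨j, hjn⟩)) := this
              _ = ∑ π : Equiv.Perm (Fin n), (if h : j < n
                    then v (π ⟨j, h⟩) (serialDictatorship n σ π (π ⟨j, h⟩)) else 0) := by
                  apply Finset.sum_congr rfl; intro π _; rw [dif_pos hjn]
        _ = ∑ π : Equiv.Perm (Fin n), ∑ j ∈ Finset.range T, (if h : j < n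
              then v (π ⟨j, h⟩) (serialDictatorship n σ π (π ⟨j, h⟩)) else 0) := Finset.sum_comm
        _ ≤ ∑ π : Equiv.Perm (Fin n), ∑ i, v i (serialDictatorship n σ π i) :=
            Finset.sum_le_sum fun π _ => hposns π
    -- final arithmetic
    have hX : R^2/4 ≤ (T:ℝ) * R - (T:ℝ) * ((T:ℝ) - 1) := by nlinarith
    have hfinal : 1/(8*Real.sqrt n) * R
        ≤ ((Nat.factorial (n-1) : ℝ) * ((T:ℝ) * R - (T:ℝ) * ((T:ℝ) - 1)))
            / (Nat.factorial n : ℝ) := by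
      rw [fac_eq hn0, mul_comm (n:ℝ) (Nat.factorial (n-1) : ℝ),
        mul_div_mul_left _ _ (ne_of_gt hfacpos')]
      rw [div_mul_eq_mul_div, one_mul, div_le_div_iff₀ h8 hn0R]
      nlinarith [mul_le_mul_of_nonneg_left hX (le_of_lt h8),
        mul_le_mul_of_nonneg_left (le_of_lt hcase)
          (mul_nonneg (mul_nonneg (by norm_num : (0:ℝ) ≤ 2) (Real.sqrt_nonneg n)) hR0)]
    calc 1/(8*Real.sqrt n) * R
        ≤ ((Nat.factorial (n-1) : ℝ) * ((T:ℝ) * R - (T:ℝ) * ((T:ℝ) - 1)))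
            / (Nat.factorial n : ℝ) := hfinal
      _ ≤ (∑ π : Equiv.Perm (Fin n), ∑ i, v i (serialDictatorship n σ π i))
            / (Nat.factorial n : ℝ) := by
          gcongr
end

section
/- There exists a constant c > 0 such that for every n ≥ 2 and every deterministic ordinal one-sided matching rule f, which maps each profile of strict rankings of n agents over n items to a single perfect matching (bijection from agents to items), there exists an instance with unit-sum valuations and consistent rankings ≻ such that max_{μ} SW(μ) ≥ c·n² · SW(f(≻)), where the maximum is over all perfect matchings μ. In particular, every deterministic ordinal one-sided matching rule has distortion Ω(n²). -/
open Finset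

lemma exists_perm_extend {n : ℕ} (s : Finset (Fin n)) (g : Fin n → Fin n)
    (hg : Set.InjOn g s) : ∃ μ : Equiv.Perm (Fin n), ∀ i ∈ s, μ i = g i := by
  classical
  have hbij : Function.Bijective
      (fun x : {x // x ∈ s} =>
        (⟨g x.1, Finset.mem_image_of_mem g x.2⟩ : {y // y ∈ s.image g})) := by
    constructor
    · rintro ⟨a, ha⟩ ⟨b, hb⟩ h
      simp only [Subtype.mk.injEq] at h
      exact Subtype.ext (hg ha hb h)
    · rintro ⟨y, hy⟩
      rcases Finset.mem_image.mp hy with ⟨x, hx, rfl⟩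
      exact ⟨⟨x, hx⟩, rfl⟩
  let e₁ := Equiv.ofBijective _ hbij
  have hcard : Fintype.card {x // ¬ (x ∈ s)} = Fintype.card {y // ¬ (y ∈ s.image g)} := by
    have h1 : Fintype.card {x // x ∈ s} = Fintype.card {y // y ∈ s.image g} :=
      Fintype.card_congr e₁
    have h2 := Fintype.card_subtype_compl (fun x : Fin n => x ∈ s)
    have h3 := Fintype.card_subtype_compl (fun y : Fin n => y ∈ s.image g)
    rw [h2, h3, h1]
  let e₂ := Fintype.equivOfCardEq hcard
  refine ⟨Equiv.subtypeCongr e₁ e₂, ?_⟩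
  intro i hi
  simp only [Equiv.subtypeCongr, Equiv.trans_apply]
  rw [Equiv.sumCompl_symm_apply_of_pos hi]
  simp [e₁]

/-- **Lower bound of `Ω(n²)` for deterministic ordinal one-sided matching rules**
(Amanatidis, Birmpas, Filos-Ratsikas, Voudouris). There is a constant `c > 0` such
that for every `n ≥ 2` and every deterministic ordinal matching rule `f` — mapping each
profile of strict rankings of the `n` agents over the `n` items (`σ i g` is the
0-indexed position of item `g` in agent `i`'s ranking) to a single perfect matching
(a bijection `Fin n ≃ Fin n` from agents to items) — there is an instance with
nonnegative unit-sum valuations `v` and consistent rankings `σ` in which some perfect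
matching `μ` has social welfare at least `c⬝n²` times the social welfare of `f σ`,
where `SW(μ) = ∑ i, v i (μ i)`. -/
theorem deterministic_matching_distortion_lower_bound :
    ∃ c : ℝ, 0 < c ∧
      ∀ (n : ℕ), 2 ≤ n →
      ∀ f : (Fin n → (Fin n ≃ Fin n)) → Equiv.Perm (Fin n),
        ∃ (v : Fin n → Fin n → ℝ) (σ : Fin n → (Fin n ≃ Fin n)),
          (∀ i g, 0 ≤ v i g) ∧ (∀ i, ∑ g, v i g = 1) ∧
          (∀ i g g', σ i g < σ i g' → v i g' ≤ v i g) ∧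
          ∃ μ : Equiv.Perm (Fin n),
            c * (n : ℝ) ^ 2 * ∑ i, v i (f σ i) ≤ ∑ i, v i (μ i) := by
  classical
  refine ⟨1/32, by norm_num, ?_⟩
  intro n hn f
  have h0 : 0 < n := by omega
  have hnR : (0:ℝ) < n := by exact_mod_cast h0
  set z : Fin n := ⟨0, h0⟩ with hz
  set o : Fin n := ⟨1, hn⟩ with ho
  have hzo : z ≠ o := by simp [hz, ho, Fin.ext_iff]
  have hslt : ∀ i : Fin n, i.val / 2 + 1 < n := by
    intro i; have := i.isLt; omega
  set s : Fin n → Fin n := (fun i => ⟨i.val / 2 + 1, hslt i⟩) with hsdef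
  have hsz : ∀ i, z ≠ s i := by
    intro i; simp [hz, hsdef, Fin.ext_iff]
  set σ : Fin n → (Fin n ≃ Fin n) := (fun i => Equiv.swap o (s i)) with hσdef
  have hσz : ∀ i, σ i z = z := by
    intro i
    exact Equiv.swap_apply_of_ne_of_ne hzo (hsz i)
  have hσs : ∀ i, σ i (s i) = o := fun i => Equiv.swap_apply_right _ _
  set π : Equiv.Perm (Fin n) := f σ with hπ
  set istar : Fin n := π.symm z with histar
  set v : Fin n → Fin n → ℝ := (fun i g =>
    if i = istar then (n:ℝ)⁻¹
    else if π i = s i then (if σ i g = z then 1 else 0)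
    else (if (σ i g).val ≤ 1 then 1/2 else 0)) with hv
  -- nonnegativity
  have hnn : ∀ i g, 0 ≤ v i g := by
    intro i g
    simp only [hv]
    split_ifs <;> positivity
  -- value at s i for "deep" agents
  have hval_s : ∀ i, i ≠ istar → π i ≠ s i → v i (s i) = 1/2 := by
    intro i h1 h2
    have he : v i (s i) = if (σ i (s i)).val ≤ 1 then 1/2 else 0 := by
      simp only [hv, if_neg h1, if_neg h2]
    rw [he, hσs i, if_pos (by simp [ho])]
  -- value at z for non-istar agents
  have hval_z : ∀ i, i ≠ istar → (1:ℝ)/2 ≤ v i z := by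
    intro i h1
    simp only [hv, if_neg h1, hσz i]
    by_cases h2 : π i = s i
    · rw [if_pos h2]; simp; norm_num
    · rw [if_neg h2, if_pos (by simp [hz])]
  refine ⟨v, σ, hnn, ?_, ?_, ?_⟩
  · -- unit sum
    intro i
    by_cases h1 : i = istar
    · have he : ∀ g, v i g = (n:ℝ)⁻¹ := fun g => by simp [hv, h1]
      rw [Finset.sum_congr rfl (fun g _ => he g), Finset.sum_const, Finset.card_univ,
        Fintype.card_fin, nsmul_eq_mul]
      field_simp
    · by_cases h2 : π i = s i
      · simp only [hv, if_neg h1, if_pos h2]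
        rw [Equiv.sum_comp (σ i) (fun r => if r = z then (1:ℝ) else 0)]
        rw [Finset.sum_ite_eq' Finset.univ z (fun _ => (1:ℝ))]
        simp
      · simp only [hv, if_neg h1, if_neg h2]
        rw [Equiv.sum_comp (σ i) (fun r => if r.val ≤ 1 then (1:ℝ)/2 else 0)]
        have hfun : ∀ r : Fin n, (if r.val ≤ 1 then (1:ℝ)/2 else 0)
            = (if r = z then 1/2 else 0) + (if r = o then 1/2 else 0) := by
          intro r
          by_cases hr : r.val ≤ 1
          · have : r = z ∨ r = o := by
              have := r.isLt
              rcases Nat.le_one_iff_eq_zero_or_eq_one.mp hr with h | h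
              · left; apply Fin.ext; simp [hz, h]
              · right; apply Fin.ext; simp [ho, h]
            rcases this with rfl | rfl
            · rw [if_pos hr, if_pos rfl, if_neg hzo, add_zero]
            · rw [if_pos hr, if_neg (fun e => hzo e.symm), if_pos rfl, zero_add]
          · have hr1 : ¬ r = z := fun e => hr (by simp [e, hz])
            have hr2 : ¬ r = o := fun e => hr (by simp [e, ho])
            rw [if_neg hr, if_neg hr1, if_neg hr2, add_zero]
        rw [Finset.sum_congr rfl (fun r _ => hfun r), Finset.sum_add_distrib,
          Finset.sum_ite_eq' Finset.univ z (fun _ => (1:ℝ)/2),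
          Finset.sum_ite_eq' Finset.univ o (fun _ => (1:ℝ)/2)]
        simp
        norm_num
  · -- consistency
    intro i g g' hlt
    by_cases h1 : i = istar
    · simp [hv, h1]
    · by_cases h2 : π i = s i
      · simp only [hv, if_neg h1, if_pos h2]
        by_cases h3 : σ i g' = z
        · rw [Fin.lt_def, h3] at hlt
          simp [hz] at hlt
        · rw [if_neg h3]
          split_ifs <;> norm_num
      · simp only [hv, if_neg h1, if_neg h2]
        by_cases h3 : (σ i g').val ≤ 1
        · rw [Fin.lt_def] at hlt
          rw [if_pos h3, if_pos (by omega)]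
        · rw [if_neg h3]
          split_ifs <;> norm_num
  · -- the matching μ
    have hSW : ∑ i, v i (f σ i) = (n:ℝ)⁻¹ := by
      rw [← hπ]
      rw [Finset.sum_eq_single istar]
      · have hπi : π istar = z := by simp [histar]
        simp [hv, hπi]
      · intro i _ h1
        by_cases h2 : π i = s i
        · have he : v i (π i) = if σ i (π i) = z then 1 else 0 := by
            simp only [hv, if_neg h1, if_pos h2]
          rw [he, h2, hσs i, if_neg (by simp [ho, hz, Fin.ext_iff])]
        · have he : v i (π i) = if (σ i (π i)).val ≤ 1 then 1/2 else 0 := by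
            simp only [hv, if_neg h1, if_neg h2]
          have hnle : ¬ (σ i (π i)).val ≤ 1 := by
            intro hle
            have hcase : σ i (π i) = z ∨ σ i (π i) = o := by
              rcases Nat.le_one_iff_eq_zero_or_eq_one.mp hle with h | h
              · left; apply Fin.ext; simp [hz, h]
              · right; apply Fin.ext; simp [ho, h]
            rcases hcase with h | h
            · have : π i = z := (σ i).injective (by rw [h, hσz i])
              exact h1 (by simp [histar, ← this])
            · have : π i = s i := (σ i).injective (by rw [h, hσs i])
              exact h2 this
          rw [he, if_neg hnle]
      · intro h; exact absurd (Finset.mem_univ istar) h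
    rw [hSW]
    have hLHS : (1:ℝ)/32 * (n:ℝ)^2 * (n:ℝ)⁻¹ = n/32 := by field_simp
    rw [hLHS]
    by_cases hsmall : n ≤ 16
    · -- small case: give item z to some agent ≠ istar
      obtain ⟨j, hj⟩ : ∃ j : Fin n, j ≠ istar := by
        exact Fintype.exists_ne_of_one_lt_card (by rw [Fintype.card_fin]; omega) istar
      refine ⟨(Equiv.swap istar j).trans π, ?_⟩
      have hμj : ((Equiv.swap istar j).trans π) j = z := by
        simp [Equiv.trans_apply, Equiv.swap_apply_right, histar]
      have hge : (1:ℝ)/2 ≤ ∑ i, v i (((Equiv.swap istar j).trans π) i) := by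
        calc (1:ℝ)/2 ≤ v j z := hval_z j hj
        _ = v j (((Equiv.swap istar j).trans π) j) := by rw [hμj]
        _ ≤ ∑ i, v i (((Equiv.swap istar j).trans π) i) :=
            Finset.single_le_sum (fun i _ => hnn i _) (Finset.mem_univ j)
      have h16 : (n:ℝ) ≤ 16 := by exact_mod_cast hsmall
      linarith
    · -- large case
      push_neg at hsmall
      set E : Finset (Fin n) :=
        Finset.univ.filter (fun i => i ≠ istar ∧ π i ≠ s i) with hE
      set T : Finset (Fin n) :=
        Finset.univ.filter (fun i => i ≠ istar ∧ π i = s i) with hT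
      have hET : E.card + T.card = n - 1 := by
        have hunion : E ∪ T = Finset.univ.erase istar := by
          ext i
          simp only [hE, hT, Finset.mem_union, Finset.mem_filter, Finset.mem_erase,
            Finset.mem_univ, true_and, and_true]
          tauto
        have hdisj : Disjoint E T := by
          rw [Finset.disjoint_left]
          intro a ha hb
          simp only [hE, hT, Finset.mem_filter, Finset.mem_univ, true_and] at ha hb
          exact ha.2 hb.2
        have h := Finset.card_union_of_disjoint hdisj
        rw [hunion, Finset.card_erase_of_mem (Finset.mem_univ _), Finset.card_univ,
          Fintype.card_fin] at h
        omega
      have hTcard : T.card * 2 ≤ n + 1 := by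
        have hmem : ∀ i ∈ T, i.val / 2 ∈ Finset.range ((n+1)/2) := by
          intro i hi
          rw [Finset.mem_range]
          have := i.isLt
          omega
        have hinjT : Set.InjOn (fun i : Fin n => i.val / 2) T := by
          intro i hi j hj hij
          simp only [hT, Finset.mem_coe, Finset.mem_filter, Finset.mem_univ, true_and] at hi hj
          have hij' : i.val / 2 = j.val / 2 := hij
          have hss : s i = s j := by
            apply Fin.ext
            show i.val / 2 + 1 = j.val / 2 + 1
            omega
          exact π.injective (by rw [hi.2, hj.2, hss])
        have := Finset.card_le_card_of_injOn _ hmem hinjT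
        rw [Finset.card_range] at this
        omega
      set R : ℕ → Finset (Fin n) := (fun b =>
        Finset.univ.filter (fun i => i.val % 2 = b ∧ i ≠ istar ∧ π i ≠ s i)) with hR
      have hRE : (R 0).card + (R 1).card = E.card := by
        have hunion : R 0 ∪ R 1 = E := by
          ext i
          simp only [hR, hE, Finset.mem_union, Finset.mem_filter, Finset.mem_univ, true_and]
          constructor
          · rintro (⟨_, h⟩ | ⟨_, h⟩) <;> exact h
          · intro h
            rcases Nat.mod_two_eq_zero_or_one i.val with hp | hp
            · exact Or.inl ⟨hp, h⟩
            · exact Or.inr ⟨hp, h⟩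
        have hdisj : Disjoint (R 0) (R 1) := by
          rw [Finset.disjoint_left]
          intro a ha hb
          simp only [hR, Finset.mem_filter, Finset.mem_univ, true_and] at ha hb
          omega
        have h := Finset.card_union_of_disjoint hdisj
        rw [hunion] at h
        omega
      obtain ⟨b, hb⟩ : ∃ b, E.card ≤ 2 * (R b).card := by
        rcases le_total ((R 0).card) ((R 1).card) with h | h
        · exact ⟨1, by omega⟩
        · exact ⟨0, by omega⟩
      have hinj : Set.InjOn s (R b) := by
        intro i hi j hj hij
        simp only [hR, Finset.mem_coe, Finset.mem_filter, Finset.mem_univ, true_and] at hi hj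
        have h1 : i.val / 2 + 1 = j.val / 2 + 1 := by
          have := congrArg Fin.val hij
          exact this
        have hpi := hi.1
        have hpj := hj.1
        apply Fin.ext
        omega
      obtain ⟨μ, hμ⟩ := exists_perm_extend (R b) s hinj
      refine ⟨μ, ?_⟩
      have hsum1 : ∑ i ∈ R b, v i (μ i) = ((R b).card : ℝ) * (1/2 : ℝ) := by
        rw [Finset.sum_congr rfl (fun i hi => ?_), Finset.sum_const, nsmul_eq_mul]
        rw [hμ i hi]
        simp only [hR, Finset.mem_filter, Finset.mem_univ, true_and] at hi
        exact hval_s i hi.2.1 hi.2.2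
      have hsum2 : ∑ i ∈ R b, v i (μ i) ≤ ∑ i, v i (μ i) :=
        Finset.sum_le_sum_of_subset_of_nonneg (Finset.subset_univ _)
          (fun i _ _ => hnn i _)
      have hcount : 4 * (R b).card + 3 ≥ n := by omega
      have hcR : ((n:ℝ) - 3) / 4 ≤ ((R b).card : ℝ) := by
        have hc : (n:ℝ) ≤ 4 * ((R b).card : ℝ) + 3 := by exact_mod_cast hcount
        linarith
      have h17 : (17:ℝ) ≤ n := by exact_mod_cast hsmall
      have hfin := hsum2
      rw [hsum1] at hfin
      linarith
end
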